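/- arXiv:2206.14528 — 9 statements merged into one kernel-verified Lean document; each statement's English description precedes it below -/
import Mathlib

section
/- Let P be an m×m real symmetric matrix with eigenvalues α₁ ≤ α₂ ≤ … ≤ α_m listed in ascending order with multiplicity, let d ≤ m, and let Λ = diag(λ₁, …, λ_d) with λ₁ ≥ λ₂ ≥ … ≥ λ_d ≥ 0. Then the minimum of tr(S P Sᵀ) over all S ∈ ℝ^{d×m} satisfying S Sᵀ = Λ equals ∑_{j=1}^{d} α_j λ_j; that is, every such S satisfies tr(S P Sᵀ) ≥ ∑_{j=1}^{d} α_j λ_j, and equality is attained by S = √Λ Xᵀ, where the columns of X ∈ ℝ^{m×d} are pairwise orthonormal eigenvectors of P associated with the d smallest eigenvalues α₁, …, α_d and √Λ = diag(√λ₁, …, √λ_d). -/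
open Matrix

open Finset in

lemma abel_identity (f e : ℕ → ℝ) (d : ℕ) :
    ∑ j ∈ Finset.range d, f j * e j =
    (∑ k ∈ Finset.range d, (f k - f (k+1)) * (∑ j ∈ Finset.range (k+1), e j))
      + f d * (∑ j ∈ Finset.range d, e j) := by
  induction d with
  | zero => simp
  | succ n ih =>
    rw [Finset.sum_range_succ, ih, Finset.sum_range_succ
      (f := fun k => (f k - f (k+1)) * (∑ j ∈ Finset.range (k+1), e j)),
      Finset.sum_range_succ (f := e)]
    ring

lemma antitone_nonneg (f : ℕ → ℝ) (d : ℕ) (hf : ∀ k < d, f (k+1) ≤ f k) (h0 : f d = 0) :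
    ∀ k ≤ d, 0 ≤ f k := by
  have key : ∀ n k, k + n ≤ d → f (k + n) ≤ f k := by
    intro n
    induction n with
    | zero => intro k _; simp
    | succ n ih =>
      intro k h
      have h1 : k + n < d := by omega
      have h2 := hf (k+n) h1
      have h3 := ih k (by omega)
      calc f (k + (n+1)) = f ((k+n)+1) := by rw [Nat.add_succ]
        _ ≤ f (k+n) := h2
        _ ≤ f k := h3
  intro k hk
  have h := key (d - k) k (by omega)
  rw [show k + (d-k) = d by omega, h0] at h
  exact h

lemma abel_ineq (d : ℕ) (f g h : ℕ → ℝ)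
    (hf : ∀ k < d, f (k+1) ≤ f k) (hfd : f d = 0)
    (hgh : ∀ k < d, 0 < f k → ∑ j ∈ Finset.range (k+1), h j ≤ ∑ j ∈ Finset.range (k+1), g j) :
    ∑ j ∈ Finset.range d, f j * h j ≤ ∑ j ∈ Finset.range d, f j * g j := by
  rw [abel_identity f h d, abel_identity f g d, hfd]
  simp only [zero_mul, add_zero]
  apply Finset.sum_le_sum
  intro k hk
  rw [Finset.mem_range] at hk
  have hnn := antitone_nonneg f d hf hfd
  rcases eq_or_lt_of_le (hf k hk) with heq | hlt
  · rw [heq, sub_self, zero_mul, zero_mul]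
  · have h1 : 0 ≤ f k - f (k+1) := by linarith
    have h2 : 0 < f k := lt_of_le_of_lt (hnn (k+1) (by omega)) hlt
    exact mul_le_mul_of_nonneg_left (hgh k hk h2) h1

lemma indicator_sum (n K : ℕ) (hK : K < n) (F : ℕ → ℝ) :
    ∑ j ∈ Finset.range n, (if j ≤ K then F j else 0) = ∑ j ∈ Finset.range (K+1), F j := by
  have h1 : ∀ j, (if j ≤ K then F j else 0) = (if j ∈ Finset.range (K+1) then F j else 0) := by
    intro j; simp [Nat.lt_succ_iff]
  simp only [h1]
  rw [Finset.sum_ite_mem, Finset.inter_eq_right.mpr (Finset.range_subset_range.mpr (by omega))]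

lemma pivot (m : ℕ) (α : Fin m → ℝ) (hα : Monotone α) (K : ℕ) (hK : K < m)
    (t : Fin m → ℝ) (ht0 : ∀ i, 0 ≤ t i) (ht1 : ∀ i, t i ≤ 1)
    (hsum : ∑ i, t i = K + 1) :
    ∑ i : Fin m, (if (i:ℕ) ≤ K then α i else 0) ≤ ∑ i, α i * t i := by
  classical
  set p : Fin m := ⟨K, hK⟩ with hp
  have hχ : ∑ i : Fin m, (if (i:ℕ) ≤ K then (1:ℝ) else 0) = K + 1 := by
    rw [Fin.sum_univ_eq_sum_range (fun j => if j ≤ K then (1:ℝ) else 0) m,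
      indicator_sum m K hK]
    simp
  have hterm : ∀ i : Fin m,
      α p * (t i - (if (i:ℕ) ≤ K then 1 else 0)) ≤
        α i * t i - (if (i:ℕ) ≤ K then α i else 0) := by
    intro i
    by_cases h : (i:ℕ) ≤ K
    · simp only [if_pos h]
      have hip : i ≤ p := by rw [Fin.le_def]; exact h
      have h1 : α i ≤ α p := hα hip
      nlinarith [ht1 i]
    · simp only [if_neg h]
      have hpi : p ≤ i := by rw [Fin.le_def]; show K ≤ (i:ℕ); omega
      have h1 : α p ≤ α i := hα hpi
      nlinarith [ht0 i]
  have hsum2 := Finset.sum_le_sum (fun i (_ : i ∈ Finset.univ) => hterm i)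
  have lhs0 : (∑ i : Fin m, α p * (t i - (if (i:ℕ) ≤ K then 1 else 0))) = 0 := by
    rw [← Finset.mul_sum, Finset.sum_sub_distrib, hsum, hχ]; ring
  have rhs : (∑ i : Fin m, (α i * t i - (if (i:ℕ) ≤ K then α i else 0)))
      = (∑ i, α i * t i) - ∑ i : Fin m, (if (i:ℕ) ≤ K then α i else 0) := by
    rw [Finset.sum_sub_distrib]
  rw [lhs0, rhs] at hsum2
  linarith

lemma bessel (d m : ℕ) (W : Matrix (Fin d) (Fin m) ℝ) (lam : Fin d → ℝ)
    (hW : ∀ j j' : Fin d, ∑ i, W j i * W j' i = if j = j' then lam j else 0)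
    (T : Finset (Fin d)) (hT : ∀ j ∈ T, 0 < lam j) (i : Fin m) :
    ∑ j ∈ T, W j i ^ 2 / lam j ≤ 1 := by
  classical
  set c : Fin d → ℝ := fun j => W j i / lam j with hc
  set r : Fin m → ℝ := fun i' => (if i' = i then 1 else 0) - ∑ j ∈ T, c j * W j i' with hr
  have h0 : (0:ℝ) ≤ ∑ i', r i' ^ 2 := Finset.sum_nonneg (fun _ _ => sq_nonneg _)
  have hsq : ∀ i' : Fin m, r i' ^ 2 =
      ((if i' = i then (1:ℝ) else 0)
      - 2 * ((if i' = i then (1:ℝ) else 0) * (∑ j ∈ T, c j * W j i')))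
      + (∑ j ∈ T, c j * W j i') * (∑ j ∈ T, c j * W j i') := by
    intro i'; rw [hr]; dsimp only; split <;> ring
  have h1 : ∑ i' : Fin m, (if i' = i then (1:ℝ) else 0) = 1 := by simp
  have h2 : ∑ i' : Fin m, (if i' = i then (1:ℝ) else 0) * (∑ j ∈ T, c j * W j i')
      = ∑ j ∈ T, c j * W j i := by
    rw [Finset.sum_eq_single i]
    · simp
    · intro b _ hb; rw [if_neg hb, zero_mul]
    · intro hi; exact absurd (Finset.mem_univ i) hi
  have h3 : ∑ i' : Fin m, (∑ j ∈ T, c j * W j i') * (∑ j ∈ T, c j * W j i')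
      = ∑ j ∈ T, c j ^ 2 * lam j := by
    have e1 : ∀ i' : Fin m, (∑ j ∈ T, c j * W j i') * (∑ j ∈ T, c j * W j i')
        = ∑ j ∈ T, ∑ j' ∈ T, (c j * c j') * (W j i' * W j' i') := by
      intro i'
      rw [Finset.sum_mul_sum]
      apply Finset.sum_congr rfl; intro j _
      apply Finset.sum_congr rfl; intro j' _
      ring
    simp only [e1]
    rw [Finset.sum_comm]
    have e2 : ∀ j ∈ T, (∑ i' : Fin m, ∑ j' ∈ T, (c j * c j') * (W j i' * W j' i'))
        = c j ^ 2 * lam j := by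
      intro j hj
      rw [Finset.sum_comm]
      have e3 : ∀ j' ∈ T, ∑ i' : Fin m, (c j * c j') * (W j i' * W j' i')
          = (c j * c j') * (if j = j' then lam j else 0) := by
        intro j' _
        rw [← Finset.mul_sum, hW j j']
      rw [Finset.sum_congr rfl e3, Finset.sum_eq_single j]
      · rw [if_pos rfl]; ring
      · intro b _ hb; rw [if_neg (Ne.symm hb), mul_zero]
      · intro hj'; exact absurd hj hj'
    exact Finset.sum_congr rfl e2
  have h4 : ∑ j ∈ T, c j * W j i = ∑ j ∈ T, W j i ^ 2 / lam j := by
    apply Finset.sum_congr rfl; intro j hj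
    have hne := (hT j hj).ne'
    rw [hc]; dsimp only; field_simp
  have h5 : ∑ j ∈ T, c j ^ 2 * lam j = ∑ j ∈ T, W j i ^ 2 / lam j := by
    apply Finset.sum_congr rfl; intro j hj
    have hne := (hT j hj).ne'
    rw [hc]; dsimp only; field_simp
  rw [Finset.sum_congr rfl (fun i' _ => hsq i'), Finset.sum_add_distrib,
    Finset.sum_sub_distrib, h1, ← Finset.mul_sum, h2, h3, h4, h5] at h0
  linarith
example (n K : ℕ) (h : K < n) : (Finset.univ.filter fun i : Fin n => (i:ℕ) ≤ K).card = K+1 := by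
  have e : (Finset.univ.filter fun i : Fin n => (i:ℕ) ≤ K) = Finset.Iic (⟨K,h⟩ : Fin n) := by
    ext i; simp [Fin.le_def]
  rw [e, Fin.card_Iic]

lemma card_filter_le_fin (n K : ℕ) (h : K < n) :
    (Finset.univ.filter fun i : Fin n => (i:ℕ) ≤ K).card = K+1 := by
  have e : (Finset.univ.filter fun i : Fin n => (i:ℕ) ≤ K) = Finset.Iic (⟨K,h⟩ : Fin n) := by
    ext i; simp [Fin.le_def]
  rw [e, Fin.card_Iic]

lemma part1 (m d : ℕ) (hd : d ≤ m)
    (P : Matrix (Fin m) (Fin m) ℝ)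
    (α : Fin m → ℝ) (hα : Monotone α)
    (v : Fin m → (Fin m → ℝ))
    (hv_orth : ∀ i j : Fin m, v i ⬝ᵥ v j = if i = j then (1 : ℝ) else 0)
    (hv_eig : ∀ j : Fin m, P *ᵥ v j = α j • v j)
    (lam : Fin d → ℝ)
    (hlam_anti : ∀ i j : Fin d, i ≤ j → lam j ≤ lam i)
    (hlam_nonneg : ∀ j : Fin d, 0 ≤ lam j) :
    ∀ S : Matrix (Fin d) (Fin m) ℝ, S * Sᵀ = Matrix.diagonal lam →
      ∑ j : Fin d, α (Fin.castLE hd j) * lam j ≤ (S * P * Sᵀ).trace := by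
  intro S hS
  classical
  set V : Matrix (Fin m) (Fin m) ℝ := Matrix.of v with hV
  have hVVt : V * Vᵀ = 1 := by
    ext i j
    simp only [Matrix.mul_apply, Matrix.transpose_apply, hV, Matrix.of_apply, Matrix.one_apply]
    have h := hv_orth i j
    rw [dotProduct] at h
    exact h
  have hVtV : Vᵀ * V = 1 := mul_eq_one_comm.mp hVVt
  have hPV : P * Vᵀ = Vᵀ * Matrix.diagonal α := by
    ext p j
    rw [Matrix.mul_apply, Matrix.mul_diagonal]
    simp only [Matrix.transpose_apply, hV, Matrix.of_apply]
    have h := congrFun (hv_eig j) p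
    simp only [Matrix.mulVec, dotProduct, Pi.smul_apply, smul_eq_mul] at h
    rw [h]; ring
  have hP2 : P = Vᵀ * Matrix.diagonal α * V := by
    calc P = P * (Vᵀ * V) := by rw [hVtV, mul_one]
      _ = (P * Vᵀ) * V := by rw [Matrix.mul_assoc]
      _ = Vᵀ * Matrix.diagonal α * V := by rw [hPV]
  set W : Matrix (Fin d) (Fin m) ℝ := S * Vᵀ with hW
  have hWWt : W * Wᵀ = Matrix.diagonal lam := by
    rw [hW, Matrix.transpose_mul, Matrix.transpose_transpose]
    have e : S * Vᵀ * (V * Sᵀ) = S * (Vᵀ * V * Sᵀ) := by simp only [Matrix.mul_assoc]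
    rw [e, hVtV, Matrix.one_mul, hS]
  have hWrow : ∀ j j' : Fin d, ∑ i, W j i * W j' i = if j = j' then lam j else 0 := by
    intro j j'
    have h := congrFun (congrFun hWWt j) j'
    simp only [Matrix.mul_apply, Matrix.transpose_apply, Matrix.diagonal_apply] at h
    exact h
  have hW0 : ∀ j : Fin d, lam j = 0 → ∀ i, W j i = 0 := by
    intro j hj i
    have h := hWrow j j
    rw [if_pos rfl, hj] at h
    have hterm : ∀ i' ∈ Finset.univ, (0:ℝ) ≤ W j i' * W j i' := fun i' _ => mul_self_nonneg _
    have h2 := (Finset.sum_eq_zero_iff_of_nonneg hterm).mp h i (Finset.mem_univ i)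
    exact mul_self_eq_zero.mp h2
  have hrowsum : ∀ j : Fin d, ∑ i : Fin m, W j i ^ 2 = lam j := by
    intro j
    have h := hWrow j j
    rw [if_pos rfl] at h
    rw [← h]
    exact Finset.sum_congr rfl (fun i _ => sq (W j i) ▸ by ring)
  have htrace : (S * P * Sᵀ).trace = ∑ j : Fin d, ∑ i : Fin m, α i * W j i ^ 2 := by
    have hrw : S * P * Sᵀ = W * Matrix.diagonal α * Wᵀ := by
      rw [hP2, hW, Matrix.transpose_mul, Matrix.transpose_transpose]
      simp only [Matrix.mul_assoc]
    rw [hrw, Matrix.trace]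
    apply Finset.sum_congr rfl
    intro j _
    rw [Matrix.diag]
    rw [Matrix.mul_apply]
    apply Finset.sum_congr rfl
    intro i _
    rw [Matrix.mul_diagonal, Matrix.transpose_apply]
    ring
  -- ℕ-indexed data
  set fN : ℕ → ℝ := fun k => if h : k < d then lam ⟨k,h⟩ else 0 with hfN
  set gN : ℕ → ℝ := fun k =>
    if h : k < d then (∑ i : Fin m, α i * (W ⟨k,h⟩ i ^ 2 / lam ⟨k,h⟩)) else 0 with hgN
  set hN : ℕ → ℝ := fun k => if h : k < d then α (Fin.castLE hd ⟨k,h⟩) else 0 with hhN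
  have hf : ∀ k < d, fN (k+1) ≤ fN k := by
    intro k hk
    simp only [hfN]
    rw [dif_pos hk]
    by_cases h1 : k+1 < d
    · rw [dif_pos h1]
      exact hlam_anti ⟨k, hk⟩ ⟨k+1, h1⟩ (by simp [Fin.le_def])
    · rw [dif_neg h1]
      exact hlam_nonneg _
  have hfd : fN d = 0 := by simp only [hfN]; rw [dif_neg (lt_irrefl d)]
  have hgh : ∀ k < d, 0 < fN k →
      ∑ j ∈ Finset.range (k+1), hN j ≤ ∑ j ∈ Finset.range (k+1), gN j := by
    intro k hk hpos
    simp only [hfN] at hpos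
    rw [dif_pos hk] at hpos
    set T : Finset (Fin d) := Finset.univ.filter (fun j : Fin d => (j:ℕ) ≤ k) with hT
    have hTpos : ∀ j ∈ T, 0 < lam j := by
      intro j hj
      rw [hT, Finset.mem_filter] at hj
      have hle : j ≤ (⟨k, hk⟩ : Fin d) := by rw [Fin.le_def]; exact hj.2
      exact lt_of_lt_of_le hpos (hlam_anti j ⟨k, hk⟩ hle)
    set t : Fin m → ℝ := fun i => ∑ j ∈ T, W j i ^ 2 / lam j with ht
    have ht1 : ∀ i, t i ≤ 1 := fun i => bessel d m W lam hWrow T hTpos i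
    have ht0 : ∀ i, 0 ≤ t i := by
      intro i
      apply Finset.sum_nonneg
      intro j hj
      exact div_nonneg (sq_nonneg _) (le_of_lt (hTpos j hj))
    have hsumt : ∑ i, t i = k + 1 := by
      simp only [ht]
      rw [Finset.sum_comm]
      have e1 : ∀ j ∈ T, ∑ i : Fin m, W j i ^ 2 / lam j = 1 := by
        intro j hj
        rw [← Finset.sum_div, hrowsum j, div_self (hTpos j hj).ne']
      rw [Finset.sum_congr rfl e1, Finset.sum_const, nsmul_eq_mul, mul_one, hT,
        card_filter_le_fin d k hk]
      push_cast
      ring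
    have hkm : k < m := lt_of_lt_of_le hk hd
    have hpiv := pivot m α hα k hkm t ht0 ht1 hsumt
    -- LHS identification
    set αN : ℕ → ℝ := fun n => if h : n < m then α ⟨n, h⟩ else 0 with hαN
    have eL1 : ∑ i : Fin m, (if (i:ℕ) ≤ k then α i else 0)
        = ∑ n ∈ Finset.range m, (if n ≤ k then αN n else 0) := by
      rw [← Fin.sum_univ_eq_sum_range (fun n => if n ≤ k then αN n else 0) m]
      apply Finset.sum_congr rfl
      intro i _
      by_cases h : (i:ℕ) ≤ k
      · rw [if_pos h, if_pos h]
        simp only [hαN]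
        rw [dif_pos i.isLt, Fin.eta]
      · rw [if_neg h, if_neg h]
    have eL2 : ∑ j ∈ Finset.range (k+1), hN j = ∑ n ∈ Finset.range (k+1), αN n := by
      apply Finset.sum_congr rfl
      intro n hn
      rw [Finset.mem_range] at hn
      have hnd : n < d := by omega
      have hnm : n < m := by omega
      simp only [hhN, hαN]
      rw [dif_pos hnd, dif_pos hnm]
      congr 1
    have eL : ∑ j ∈ Finset.range (k+1), hN j
        = ∑ i : Fin m, (if (i:ℕ) ≤ k then α i else 0) := by
      rw [eL1, indicator_sum m k hkm αN, eL2]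
    -- RHS identification
    have eR : ∑ i, α i * t i = ∑ j ∈ Finset.range (k+1), gN j := by
      simp only [ht]
      calc ∑ i : Fin m, α i * ∑ j ∈ T, W j i ^ 2 / lam j
          = ∑ i : Fin m, ∑ j ∈ T, α i * (W j i ^ 2 / lam j) := by
            apply Finset.sum_congr rfl
            intro i _
            rw [Finset.mul_sum]
        _ = ∑ j ∈ T, ∑ i : Fin m, α i * (W j i ^ 2 / lam j) := Finset.sum_comm
        _ = ∑ j : Fin d, (if (j:ℕ) ≤ k then ∑ i : Fin m, α i * (W j i ^ 2 / lam j) else 0) := by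
            rw [hT, Finset.sum_filter]
        _ = ∑ n ∈ Finset.range d, (if n ≤ k then gN n else 0) := by
            rw [← Fin.sum_univ_eq_sum_range (fun n => if n ≤ k then gN n else 0) d]
            apply Finset.sum_congr rfl
            intro j _
            by_cases h : (j:ℕ) ≤ k
            · rw [if_pos h, if_pos h]
              simp only [hgN]
              rw [dif_pos j.isLt, Fin.eta]
            · rw [if_neg h, if_neg h]
        _ = ∑ j ∈ Finset.range (k+1), gN j := indicator_sum d k hk gN
    rw [eL, ← eR]
    exact hpiv
  have habel := abel_ineq d fN gN hN hf hfd hgh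
  -- final identifications
  have hLHS : ∑ j : Fin d, α (Fin.castLE hd j) * lam j = ∑ j ∈ Finset.range d, fN j * hN j := by
    rw [← Fin.sum_univ_eq_sum_range (fun k => fN k * hN k) d]
    apply Finset.sum_congr rfl
    intro j _
    simp only [hfN, hhN]
    rw [dif_pos j.isLt, dif_pos j.isLt, Fin.eta]
    ring
  have hRHS : ∑ j ∈ Finset.range d, fN j * gN j = (S * P * Sᵀ).trace := by
    rw [htrace, ← Fin.sum_univ_eq_sum_range (fun k => fN k * gN k) d]
    apply Finset.sum_congr rfl
    intro j _
    simp only [hfN, hgN]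
    rw [dif_pos j.isLt, dif_pos j.isLt, Fin.eta]
    by_cases hl : lam j = 0
    · rw [hl]
      simp only [zero_mul]
      symm
      apply Finset.sum_eq_zero
      intro i _
      rw [hW0 j hl i]
      ring
    · rw [Finset.mul_sum]
      apply Finset.sum_congr rfl
      intro i _
      field_simp
  rw [hLHS, ← hRHS]
  exact habel

lemma part2_attain (m d : ℕ) (hd : d ≤ m)
    (P : Matrix (Fin m) (Fin m) ℝ)
    (α : Fin m → ℝ)
    (v : Fin m → (Fin m → ℝ))
    (hv_orth : ∀ i j : Fin m, v i ⬝ᵥ v j = if i = j then (1 : ℝ) else 0)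
    (hv_eig : ∀ j : Fin m, P *ᵥ v j = α j • v j)
    (lam : Fin d → ℝ)
    (hlam_nonneg : ∀ j : Fin d, 0 ≤ lam j) :
    (∃ X : Matrix (Fin m) (Fin d) ℝ, Xᵀ * X = 1 ∧
      (∀ j : Fin d, P *ᵥ (fun i => X i j) = α (Fin.castLE hd j) • (fun i => X i j)) ∧
      (Matrix.diagonal (fun j => Real.sqrt (lam j)) * Xᵀ) *
          (Matrix.diagonal (fun j => Real.sqrt (lam j)) * Xᵀ)ᵀ = Matrix.diagonal lam ∧
      ((Matrix.diagonal (fun j => Real.sqrt (lam j)) * Xᵀ) * P *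
          (Matrix.diagonal (fun j => Real.sqrt (lam j)) * Xᵀ)ᵀ).trace =
        ∑ j : Fin d, α (Fin.castLE hd j) * lam j) := by
  classical
  set D : Matrix (Fin d) (Fin d) ℝ := Matrix.diagonal (fun j => Real.sqrt (lam j)) with hD
  set X : Matrix (Fin m) (Fin d) ℝ := Matrix.of (fun i j => v (Fin.castLE hd j) i) with hX
  have hX1 : Xᵀ * X = 1 := by
    ext j k
    simp only [Matrix.mul_apply, Matrix.transpose_apply, hX, Matrix.of_apply, Matrix.one_apply]
    have h := hv_orth (Fin.castLE hd j) (Fin.castLE hd k)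
    rw [dotProduct] at h
    rw [h]
    congr 1
    simp [Fin.castLE_inj]
  have hPX : P * X = X * Matrix.diagonal (fun j => α (Fin.castLE hd j)) := by
    ext i j
    rw [Matrix.mul_apply, Matrix.mul_diagonal]
    have h := congrFun (hv_eig (Fin.castLE hd j)) i
    simp only [Matrix.mulVec, dotProduct, Pi.smul_apply, smul_eq_mul] at h
    simp only [hX, Matrix.of_apply]
    rw [h]; ring
  have hDD : D * Dᵀ = Matrix.diagonal lam := by
    rw [hD, Matrix.diagonal_transpose, Matrix.diagonal_mul_diagonal]
    exact congrArg Matrix.diagonal (funext fun j => Real.mul_self_sqrt (hlam_nonneg j))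
  have hkey3 : (D * Xᵀ) * (D * Xᵀ)ᵀ = Matrix.diagonal lam := by
    calc (D * Xᵀ) * (D * Xᵀ)ᵀ = (D * Xᵀ) * (X * Dᵀ) := by
          rw [Matrix.transpose_mul, Matrix.transpose_transpose]
      _ = D * (Xᵀ * X) * Dᵀ := by simp only [Matrix.mul_assoc]
      _ = D * Dᵀ := by rw [hX1, mul_one]
      _ = Matrix.diagonal lam := hDD
  refine ⟨X, hX1, ?_, hkey3, ?_⟩
  · intro j
    have h := hv_eig (Fin.castLE hd j)
    convert h using 1 <;> rfl
  · have hkey4 : (D * Xᵀ) * P * (D * Xᵀ)ᵀ =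
        Matrix.diagonal (fun j => Real.sqrt (lam j) * (α (Fin.castLE hd j) * Real.sqrt (lam j))) := by
      calc (D * Xᵀ) * P * (D * Xᵀ)ᵀ = D * Xᵀ * (P * X) * Dᵀ := by
            rw [Matrix.transpose_mul, Matrix.transpose_transpose]
            simp only [Matrix.mul_assoc]
        _ = D * (Xᵀ * X) * Matrix.diagonal (fun j => α (Fin.castLE hd j)) * Dᵀ := by
            rw [hPX]; simp only [Matrix.mul_assoc]
        _ = D * Matrix.diagonal (fun j => α (Fin.castLE hd j)) * Dᵀ := by rw [hX1, mul_one]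
        _ = _ := by
            rw [hD, Matrix.diagonal_transpose, Matrix.diagonal_mul_diagonal,
              Matrix.diagonal_mul_diagonal]
            exact congrArg Matrix.diagonal (funext fun j => by ring)
    rw [hkey4, Matrix.trace_diagonal]
    apply Finset.sum_congr rfl
    intro j _
    linear_combination α (Fin.castLE hd j) * Real.mul_self_sqrt (hlam_nonneg j)

/-- Minimum of `tr(S P Sᵀ)` subject to `S Sᵀ = Λ` equals `∑ αⱼ λⱼ`,
attained at `S = √Λ Xᵀ` where the columns of `X` are orthonormal eigenvectors of `P`
associated with the `d` smallest eigenvalues. The symmetric matrix `P` is described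
via an orthonormal eigenbasis `v` with eigenvalues `α` listed in ascending order. -/
theorem min_trace_SPSt (m d : ℕ) (hd : d ≤ m)
    (P : Matrix (Fin m) (Fin m) ℝ) (hP : P.IsSymm)
    (α : Fin m → ℝ) (hα : Monotone α)
    (v : Fin m → (Fin m → ℝ))
    (hv_orth : ∀ i j : Fin m, v i ⬝ᵥ v j = if i = j then (1 : ℝ) else 0)
    (hv_eig : ∀ j : Fin m, P *ᵥ v j = α j • v j)
    (lam : Fin d → ℝ)
    (hlam_anti : ∀ i j : Fin d, i ≤ j → lam j ≤ lam i)
    (hlam_nonneg : ∀ j : Fin d, 0 ≤ lam j) :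
    (∀ S : Matrix (Fin d) (Fin m) ℝ, S * Sᵀ = Matrix.diagonal lam →
      ∑ j : Fin d, α (Fin.castLE hd j) * lam j ≤ (S * P * Sᵀ).trace) ∧
    (∃ X : Matrix (Fin m) (Fin d) ℝ, Xᵀ * X = 1 ∧
      (∀ j : Fin d, P *ᵥ (fun i => X i j) = α (Fin.castLE hd j) • (fun i => X i j)) ∧
      (Matrix.diagonal (fun j => Real.sqrt (lam j)) * Xᵀ) *
          (Matrix.diagonal (fun j => Real.sqrt (lam j)) * Xᵀ)ᵀ = Matrix.diagonal lam ∧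
      ((Matrix.diagonal (fun j => Real.sqrt (lam j)) * Xᵀ) * P *
          (Matrix.diagonal (fun j => Real.sqrt (lam j)) * Xᵀ)ᵀ).trace =
        ∑ j : Fin d, α (Fin.castLE hd j) * lam j) := by
  exact ⟨part1 m d hd P α hα v hv_orth hv_eig lam hlam_anti hlam_nonneg,
    part2_attain m d hd P α v hv_orth hv_eig lam hlam_nonneg⟩
end

section
/- Let Q be an m×m real symmetric matrix, let u ∈ ℝ^m be a unit eigenvector of Q, let d ≤ m − 1, and let Λ = diag(λ₁, …, λ_d) with λ₁ ≥ λ₂ ≥ … ≥ λ_d ≥ 0. Then there exists X₀ ∈ ℝ^{m×d} with X₀ᵀ X₀ = I_d and X₀ᵀ u = 0 whose columns are pairwise orthogonal unit eigenvectors of Q, each orthogonal to u, associated with the d largest eigenvalues of Q after removing one occurrence of the eigenvalue of u (ordered nonincreasingly), such that for every X ∈ ℝ^{m×d} with Xᵀ X = I_d and Xᵀ u = 0 one has tr(Xᵀ Q X Λ) ≤ tr(X₀ᵀ Q X₀ Λ). In other words, the maximum of tr(Xᵀ Q X Λ) subject to Xᵀ X = I_d and Xᵀ u = 0 is attained at the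 d top eigenvectors of Q excluding the vector u. -/
open Matrix Finset

private lemma kyfan {n : ℕ} (β : Fin n → ℝ) (hβ : ∀ i j : Fin n, i ≤ j → β j ≤ β i)
    (k : Fin n) (ρ : Fin n → ℝ) (h0 : ∀ i, 0 ≤ ρ i) (h1 : ∀ i, ρ i ≤ 1)
    (hsum : ∑ i, ρ i = ((Finset.Iic k).card : ℝ)) :
    ∑ i, β i * ρ i ≤ ∑ i ∈ Finset.Iic k, β i := by
  have e1 : ∑ i, β i * ρ i
      = ∑ i ∈ Finset.Iic k, β i * ρ i + ∑ i ∈ (Finset.Iic k)ᶜ, β i * ρ i :=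
    (Finset.sum_add_sum_compl _ _).symm
  have e2 : ∑ i, ρ i = ∑ i ∈ Finset.Iic k, ρ i + ∑ i ∈ (Finset.Iic k)ᶜ, ρ i :=
    (Finset.sum_add_sum_compl _ _).symm
  have hA : ∑ i ∈ Finset.Iic k, (β i - β k) * (ρ i - 1) ≤ 0 := by
    apply Finset.sum_nonpos
    intro i hi
    have hik : i ≤ k := Finset.mem_Iic.mp hi
    have := hβ i k hik
    nlinarith [h1 i]
  have hB : ∑ i ∈ (Finset.Iic k)ᶜ, (β i - β k) * ρ i ≤ 0 := by
    apply Finset.sum_nonpos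
    intro i hi
    have hik : k ≤ i := le_of_lt (lt_of_not_ge (by simpa [Finset.mem_Iic] using hi))
    have := hβ k i hik
    nlinarith [h0 i]
  have hsplit : ∑ i ∈ Finset.Iic k, (β i - β k) * (ρ i - 1)
      + ∑ i ∈ (Finset.Iic k)ᶜ, (β i - β k) * ρ i
      = ∑ i, β i * ρ i - ∑ i ∈ Finset.Iic k, β i
        - β k * (∑ i, ρ i - ((Finset.Iic k).card : ℝ)) := by
    rw [e1, e2]
    simp only [sub_mul, mul_sub, mul_one, Finset.sum_sub_distrib, ← Finset.mul_sum,
      Finset.sum_const, nsmul_eq_mul]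
    ring
  rw [hsum, sub_self, mul_zero, sub_zero] at hsplit
  linarith

private lemma abel_ineq_s4 {d : ℕ} (lam : Fin d → ℝ)
    (hanti : ∀ i j : Fin d, i ≤ j → lam j ≤ lam i)
    (hnn : ∀ j : Fin d, 0 ≤ lam j) (g : Fin d → ℝ)
    (hpartial : ∀ k : Fin d, ∑ j ∈ Finset.Iic k, g j ≤ 0) :
    ∑ j, lam j * g j ≤ 0 := by
  classical
  set L : ℕ → ℝ := fun j => if h : j < d then lam ⟨j, h⟩ else 0 with hL
  set G : ℕ → ℝ := fun j => if h : j < d then g ⟨j, h⟩ else 0 with hG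
  have hδ : ∀ k, 0 ≤ L k - L (k + 1) := by
    intro k
    by_cases hk : k < d
    · by_cases hk1 : k + 1 < d
      · have := hanti ⟨k, hk⟩ ⟨k + 1, hk1⟩ (by simp [Fin.le_def])
        simp only [hL, dif_pos hk, dif_pos hk1]
        linarith
      · have := hnn ⟨k, hk⟩
        simp only [hL, dif_pos hk, dif_neg hk1]
        linarith
    · have hk1 : ¬ (k + 1 < d) := by omega
      simp [hL, dif_neg hk, dif_neg hk1]
  have htel : ∀ j, j < d → L j = ∑ k ∈ Finset.Ico j d, (L k - L (k + 1)) := by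
    intro j hj
    rw [Finset.sum_Ico_eq_sub _ (le_of_lt hj), Finset.sum_range_sub', Finset.sum_range_sub']
    have hLd : L d = 0 := by simp [hL]
    rw [hLd]; ring
  have hstep1 : ∑ j, lam j * g j = ∑ j ∈ Finset.range d, L j * G j := by
    rw [Finset.sum_range fun j => L j * G j]
    apply Finset.sum_congr rfl
    intro j _
    simp [hL, hG, j.isLt]
  rw [hstep1]
  have hstep2 : ∑ j ∈ Finset.range d, L j * G j
      = ∑ j ∈ Finset.range d, ∑ k ∈ Finset.range d,
          (if j ≤ k then (L k - L (k + 1)) * G j else 0) := by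
    apply Finset.sum_congr rfl
    intro j hj
    rw [htel j (Finset.mem_range.mp hj), Finset.sum_mul]
    have : Finset.Ico j d = (Finset.range d).filter (fun k => j ≤ k) := by
      ext t; simp [Finset.mem_Ico, Finset.mem_range, Finset.mem_filter]; omega
    rw [this, Finset.sum_filter]
  rw [hstep2, Finset.sum_comm]
  apply Finset.sum_nonpos
  intro k hk
  have hkd : k < d := Finset.mem_range.mp hk
  have hinner : ∑ j ∈ Finset.range d, (if j ≤ k then (L k - L (k + 1)) * G j else 0)
      = (L k - L (k + 1)) * ∑ j ∈ Finset.range (k + 1), G j := by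
    rw [← Finset.sum_filter]
    have : (Finset.range d).filter (fun j => j ≤ k) = Finset.range (k + 1) := by
      ext t; simp [Finset.mem_range, Finset.mem_filter]; omega
    rw [this, Finset.mul_sum]
  rw [hinner]
  have hpart : ∑ j ∈ Finset.range (k + 1), G j ≤ 0 := by
    have heq : ∑ j ∈ Finset.Iic (⟨k, hkd⟩ : Fin d), g j = ∑ j ∈ Finset.range (k + 1), G j := by
      apply Finset.sum_nbij' (fun (j : Fin d) => (j : ℕ))
        (fun t => (⟨min t k, by omega⟩ : Fin d))
      · intro a ha; simp only [Finset.mem_Iic, Fin.le_def] at ha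
        simp [Finset.mem_range]; omega
      · intro a ha; simp only [Finset.mem_range] at ha
        simp [Finset.mem_Iic, Fin.le_def]
      · intro a ha; simp only [Finset.mem_Iic, Fin.le_def] at ha
        apply Fin.ext
        show min (a : ℕ) k = (a : ℕ)
        omega
      · intro a ha; simp only [Finset.mem_range] at ha
        show min a k = a
        omega
      · intro a ha
        simp only [hG, a.isLt, dif_pos]
    rw [← heq]
    exact hpartial _
  exact mul_nonpos_of_nonneg_of_nonpos (hδ k) hpart

private lemma brockett_core {n d : ℕ} (hd : d ≤ n) (β : Fin n → ℝ)
    (hβ : ∀ i j : Fin n, i ≤ j → β j ≤ β i)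
    (lam : Fin d → ℝ) (hlanti : ∀ i j : Fin d, i ≤ j → lam j ≤ lam i)
    (hlnn : ∀ j : Fin d, 0 ≤ lam j)
    (D : Fin n → Fin d → ℝ) (hD0 : ∀ i j, 0 ≤ D i j)
    (hcol : ∀ j, ∑ i, D i j = 1) (hrow : ∀ i, ∑ j, D i j ≤ 1) :
    ∑ j, lam j * (∑ i, β i * D i j) ≤ ∑ j, lam j * β (Fin.castLE hd j) := by
  classical
  have hpartial : ∀ k : Fin d,
      ∑ j ∈ Finset.Iic k, ((∑ i, β i * D i j) - β (Fin.castLE hd j)) ≤ 0 := by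
    intro k
    rw [Finset.sum_sub_distrib]
    have hmain : ∑ j ∈ Finset.Iic k, ∑ i, β i * D i j
        ≤ ∑ j ∈ Finset.Iic k, β (Fin.castLE hd j) := by
      set ρ : Fin n → ℝ := fun i => ∑ j ∈ Finset.Iic k, D i j with hρ
      have hswap : ∑ j ∈ Finset.Iic k, ∑ i, β i * D i j = ∑ i, β i * ρ i := by
        rw [Finset.sum_comm]
        exact Finset.sum_congr rfl fun i _ => (Finset.mul_sum _ _ _).symm
      have h0 : ∀ i, 0 ≤ ρ i := fun i => Finset.sum_nonneg fun j _ => hD0 i j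
      have h1 : ∀ i, ρ i ≤ 1 := by
        intro i
        calc ρ i ≤ ∑ j, D i j := by
              apply Finset.sum_le_sum_of_subset_of_nonneg (Finset.subset_univ _)
              intro j _ _; exact hD0 i j
          _ ≤ 1 := hrow i
      have hsum : ∑ i, ρ i = ((Finset.Iic (Fin.castLE hd k)).card : ℝ) := by
        have : ∑ i, ρ i = ∑ j ∈ Finset.Iic k, ∑ i, D i j := Finset.sum_comm
        rw [this]
        simp only [hcol]
        rw [Finset.sum_const, nsmul_eq_mul, mul_one]
        congr 1
        rw [Fin.card_Iic, Fin.card_Iic]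
        simp
      have hky := kyfan β hβ (Fin.castLE hd k) ρ h0 h1 hsum
      have hcast : ∑ i ∈ Finset.Iic (Fin.castLE hd k), β i
          = ∑ j ∈ Finset.Iic k, β (Fin.castLE hd j) := by
        apply Finset.sum_nbij' (fun (i : Fin n) => (⟨min (i : ℕ) (k : ℕ), by omega⟩ : Fin d))
          (fun j => Fin.castLE hd j)
        · intro a ha; simp only [Finset.mem_Iic, Fin.le_def, Fin.coe_castLE] at ha ⊢
          omega
        · intro a ha; simp only [Finset.mem_Iic, Fin.le_def, Fin.coe_castLE] at ha ⊢
          omega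
        · intro a ha; simp only [Finset.mem_Iic, Fin.le_def, Fin.coe_castLE] at ha
          apply Fin.ext
          show min (a : ℕ) (k : ℕ) = (a : ℕ)
          omega
        · intro a ha; simp only [Finset.mem_Iic, Fin.le_def, Fin.coe_castLE] at ha
          apply Fin.ext
          show min ((Fin.castLE hd a : Fin n) : ℕ) (k : ℕ) = ((Fin.castLE hd a : Fin n) : ℕ)
          simp only [Fin.coe_castLE]
          omega
        · intro a ha; simp only [Finset.mem_Iic, Fin.le_def, Fin.coe_castLE] at ha
          congr 1
          apply Fin.ext
          simp only [Fin.coe_castLE]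
          show (a : ℕ) = min (a : ℕ) (k : ℕ)
          omega
      rw [hswap, ← hcast]
      exact hky
    linarith
  have := abel_ineq_s4 lam hlanti hlnn _ hpartial
  simp only [mul_sub, Finset.sum_sub_distrib] at this
  linarith


/-- The maximum of `tr(Xᵀ Q X Λ)` subject to `Xᵀ X = I_d` and `Xᵀ u = 0`
is attained at the `d` top eigenvectors of `Q` excluding the unit eigenvector `u`.
The eigenvalues of the symmetric matrix `Q` after removing one occurrence of the
eigenvalue of `u` are described by an orthonormal family `w` of eigenvectors
orthogonal to `u`, with eigenvalues `β` ordered nonincreasingly. -/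
theorem max_brockett_excluding_u (m d : ℕ) (hd : d + 1 ≤ m)
    (Q : Matrix (Fin m) (Fin m) ℝ) (hQ : Q.IsSymm)
    (u : Fin m → ℝ) (hu_unit : u ⬝ᵥ u = 1)
    (μ : ℝ) (hu_eig : Q *ᵥ u = μ • u)
    (w : Fin (m - 1) → (Fin m → ℝ)) (β : Fin (m - 1) → ℝ)
    (hw_orth : ∀ i j : Fin (m - 1), w i ⬝ᵥ w j = if i = j then (1 : ℝ) else 0)
    (hw_u : ∀ i, w i ⬝ᵥ u = 0)
    (hw_eig : ∀ i, Q *ᵥ w i = β i • w i)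
    (hβ_anti : ∀ i j : Fin (m - 1), i ≤ j → β j ≤ β i)
    (lam : Fin d → ℝ)
    (hlam_anti : ∀ i j : Fin d, i ≤ j → lam j ≤ lam i)
    (hlam_nonneg : ∀ j : Fin d, 0 ≤ lam j) :
    ∃ X₀ : Matrix (Fin m) (Fin d) ℝ,
      (∀ j : Fin d, (fun i => X₀ i j) = w (Fin.castLE (by omega) j)) ∧
      X₀ᵀ * X₀ = 1 ∧ X₀ᵀ *ᵥ u = 0 ∧
      ∀ X : Matrix (Fin m) (Fin d) ℝ, Xᵀ * X = 1 → Xᵀ *ᵥ u = 0 →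
        (Xᵀ * Q * X * Matrix.diagonal lam).trace ≤
          (X₀ᵀ * Q * X₀ * Matrix.diagonal lam).trace := by
  
  classical
  obtain ⟨n, rfl⟩ : ∃ n, m = n + 1 := ⟨m - 1, by omega⟩
  have hdn : d ≤ n := by omega
  -- reinterpret w, β over Fin n (n + 1 - 1 = n definitionally)
  set w' : Fin n → (Fin (n + 1) → ℝ) := w with hw'
  set β' : Fin n → ℝ := β with hβ'
  set c0 : Fin d → Fin n := Fin.castLE hdn with hc0
  set X₀ : Matrix (Fin (n + 1)) (Fin d) ℝ := Matrix.of fun i j => w' (c0 j) i with hX₀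
  -- trace formula
  have htrace : ∀ M : Matrix (Fin d) (Fin d) ℝ,
      (M * Matrix.diagonal lam).trace = ∑ j, M j j * lam j := by
    intro M
    simp [Matrix.trace, Matrix.diag, Matrix.mul_diagonal]
  -- X₀ᵀ * Q * X₀ = diagonal of top β's
  have hQX₀ : Q * X₀ = Matrix.of fun k j => β' (c0 j) * w' (c0 j) k := by
    ext k j
    have := congrFun (hw_eig (c0 j)) k
    simpa [Matrix.mulVec, Matrix.mul_apply, dotProduct, X₀] using this
  have hX₀QX₀ : X₀ᵀ * Q * X₀ = Matrix.diagonal (fun j => β' (c0 j)) := by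
    rw [Matrix.mul_assoc, hQX₀]
    ext j j'
    have horth := hw_orth (c0 j) (c0 j')
    rw [dotProduct] at horth
    have : ∑ k, w' (c0 j) k * (β' (c0 j') * w' (c0 j') k)
        = β' (c0 j') * ∑ k, w' (c0 j) k * w' (c0 j') k := by
      rw [Finset.mul_sum]; exact Finset.sum_congr rfl fun k _ => by ring
    simp only [Matrix.mul_apply, Matrix.transpose_apply, Matrix.of_apply, X₀]
    rw [this, horth]
    by_cases h : j = j'
    · subst h; simp [Matrix.diagonal]
    · have : c0 j ≠ c0 j' := fun hc => h (Fin.castLE_injective hdn hc)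
      simp [Matrix.diagonal, h, this]
  have hX₀orth : X₀ᵀ * X₀ = 1 := by
    ext j j'
    have horth := hw_orth (c0 j) (c0 j')
    rw [dotProduct] at horth
    simp only [Matrix.mul_apply, Matrix.transpose_apply, Matrix.of_apply, X₀]
    rw [horth]
    by_cases h : j = j'
    · subst h; simp [Matrix.one_apply]
    · have : c0 j ≠ c0 j' := fun hc => h (Fin.castLE_injective hdn hc)
      simp [Matrix.one_apply, h, this]
  have hX₀u : X₀ᵀ *ᵥ u = 0 := by
    funext j
    have := hw_u (c0 j)
    rw [dotProduct] at this
    simpa [Matrix.mulVec, dotProduct, X₀] using this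
  refine ⟨X₀, fun j => rfl, hX₀orth, hX₀u, ?_⟩
  intro X hX hXu
  -- the orthogonal matrix W with columns w' and u
  set W : Matrix (Fin (n + 1)) (Fin (n + 1)) ℝ :=
    Matrix.of fun k i => if h : (i : ℕ) < n then w' ⟨(i : ℕ), h⟩ k else u k with hW
  set α : Fin (n + 1) → ℝ := fun i => if h : (i : ℕ) < n then β' ⟨(i : ℕ), h⟩ else μ with hα
  have hvv : ∀ i i' : Fin (n + 1), ∑ k, W k i * W k i' = if i = i' then (1 : ℝ) else 0 := by
    intro i i'
    by_cases hi : (i : ℕ) < n <;> by_cases hi' : (i' : ℕ) < n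
    · have := hw_orth ⟨(i : ℕ), hi⟩ ⟨(i' : ℕ), hi'⟩
      rw [dotProduct] at this
      simp only [hW, Matrix.of_apply, dif_pos hi, dif_pos hi']
      rw [this]
      by_cases h : i = i'
      · subst h; simp
      · have : (⟨(i : ℕ), hi⟩ : Fin (n + 1 - 1)) ≠ ⟨(i' : ℕ), hi'⟩ := by
          intro hc
          rw [Fin.ext_iff] at hc
          exact h (Fin.ext hc)
        simp [h, this]
    · have := hw_u ⟨(i : ℕ), hi⟩
      rw [dotProduct] at this
      have hne : i ≠ i' := by
        intro hc; subst hc; exact hi' hi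
      simp only [hW, Matrix.of_apply, dif_pos hi, dif_neg hi']
      rw [this]
      simp [hne]
    · have := hw_u ⟨(i' : ℕ), hi'⟩
      rw [dotProduct] at this
      have hne : i ≠ i' := by
        intro hc; subst hc; exact hi hi'
      simp only [hW, Matrix.of_apply, dif_neg hi, dif_pos hi']
      have : ∑ k, u k * w' ⟨(i' : ℕ), hi'⟩ k = 0 := by
        rw [← this]; exact Finset.sum_congr rfl fun k _ => mul_comm _ _
      rw [this]
      simp [hne]
    · have hii' : i = i' := by
        apply Fin.ext; omega
      subst hii'
      rw [dotProduct] at hu_unit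
      simp only [hW, Matrix.of_apply, dif_neg hi]
      rw [hu_unit]
      simp
  have hWtW : Wᵀ * W = 1 := by
    ext i i'
    simp only [Matrix.mul_apply, Matrix.transpose_apply, Matrix.one_apply]
    exact hvv i i'
  have hWWt : W * Wᵀ = 1 := mul_eq_one_comm.mp hWtW
  have hQW : Q * W = W * Matrix.diagonal α := by
    ext k i
    rw [Matrix.mul_diagonal]
    by_cases hi : (i : ℕ) < n
    · have := congrFun (hw_eig ⟨(i : ℕ), hi⟩) k
      simp only [Matrix.mulVec, dotProduct, Pi.smul_apply, smul_eq_mul] at this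
      simp only [Matrix.mul_apply, hW, hα, Matrix.of_apply, dif_pos hi]
      rw [this]
      ring
    · have := congrFun hu_eig k
      simp only [Matrix.mulVec, dotProduct, Pi.smul_apply, smul_eq_mul] at this
      simp only [Matrix.mul_apply, hW, hα, Matrix.of_apply, dif_neg hi]
      rw [this]
      ring
  have hWQW : Wᵀ * Q * W = Matrix.diagonal α := by
    have : Wᵀ * (Q * W) = Wᵀ * (W * Matrix.diagonal α) := by rw [hQW]
    rw [← Matrix.mul_assoc, ← Matrix.mul_assoc, hWtW, Matrix.one_mul] at this
    rw [Matrix.mul_assoc, hQW, ← Matrix.mul_assoc, hWtW, Matrix.one_mul]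
  set C : Matrix (Fin (n + 1)) (Fin d) ℝ := Wᵀ * X with hC
  have hXWC : X = W * C := by
    rw [hC, ← Matrix.mul_assoc, hWWt, Matrix.one_mul]
  have hCtC : Cᵀ * C = 1 := by
    rw [hC, Matrix.transpose_mul, Matrix.transpose_transpose]
    calc Xᵀ * W * (Wᵀ * X) = Xᵀ * (W * Wᵀ) * X := by
          rw [Matrix.mul_assoc, Matrix.mul_assoc, Matrix.mul_assoc]
      _ = 1 := by rw [hWWt, Matrix.mul_one, hX]
  have hXQX : Xᵀ * Q * X = Cᵀ * Matrix.diagonal α * C := by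
    conv_lhs => rw [hXWC]
    rw [Matrix.transpose_mul, ← hWQW]
    noncomm_ring [Matrix.mul_assoc]
  -- last row of C vanishes
  have hClast : ∀ j, C (Fin.last n) j = 0 := by
    intro j
    have := congrFun hXu j
    simp only [Matrix.mulVec, dotProduct, Matrix.transpose_apply, Pi.zero_apply] at this
    simp only [hC, Matrix.mul_apply, Matrix.transpose_apply, hW, Matrix.of_apply]
    have hlast : ¬ ((Fin.last n : Fin (n + 1)) : ℕ) < n := by simp
    simp only [dif_neg hlast]
    rw [← this]
    exact Finset.sum_congr rfl fun k _ => mul_comm _ _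
  -- diagonal entries
  have hdiag : ∀ j : Fin d, (Xᵀ * Q * X) j j = ∑ i, α i * (C i j) ^ 2 := by
    intro j
    rw [hXQX, Matrix.mul_assoc]
    simp only [Matrix.mul_apply, Matrix.diagonal_mul, Matrix.transpose_apply]
    apply Finset.sum_congr rfl
    intro i _
    have hcollapse : ∑ x, Matrix.diagonal α i x * C x j = α i * C i j := by
      rw [Finset.sum_eq_single i]
      · simp
      · intro b _ hb; simp [Matrix.diagonal_apply_ne _ (Ne.symm hb)]
      · intro h; exact absurd (Finset.mem_univ i) h
    rw [hcollapse]
    ring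
  -- row sums of C squared are at most 1
  have hrow : ∀ i : Fin (n + 1), ∑ j, (C i j) ^ 2 ≤ 1 := by
    intro i
    set v : Fin (n + 1) → ℝ := fun k => W k i with hv
    set y : Fin d → ℝ := Xᵀ *ᵥ v with hy
    have hyC : ∀ j, y j = C i j := by
      intro j
      simp only [hy, hv, hC, Matrix.mulVec, dotProduct, Matrix.mul_apply,
        Matrix.transpose_apply]
      exact Finset.sum_congr rfl fun k _ => mul_comm _ _
    have hvv1 : v ⬝ᵥ v = 1 := by
      have := hvv i i
      simp only [if_pos rfl] at this
      simpa [dotProduct, hv] using this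
    set z : Fin (n + 1) → ℝ := X *ᵥ y with hz
    have hvz : v ⬝ᵥ z = y ⬝ᵥ y := by
      rw [hz, Matrix.dotProduct_mulVec, ← Matrix.mulVec_transpose, ← hy]
    have hzy : Xᵀ *ᵥ z = y := by
      rw [hz, Matrix.mulVec_mulVec, hX, Matrix.one_mulVec]
    have hzz : z ⬝ᵥ z = y ⬝ᵥ y := by
      conv_lhs => rw [hz]
      rw [Matrix.dotProduct_mulVec, ← Matrix.mulVec_transpose, hzy]
    have hpos : 0 ≤ (v - z) ⬝ᵥ (v - z) := by
      have : (v - z) ⬝ᵥ (v - z) = ∑ k, (v k - z k) * (v k - z k) := by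
        simp [dotProduct]
      rw [this]
      exact Finset.sum_nonneg fun k _ => mul_self_nonneg _
    have hexp : (v - z) ⬝ᵥ (v - z) = v ⬝ᵥ v - 2 * (v ⬝ᵥ z) + z ⬝ᵥ z := by
      rw [sub_dotProduct, dotProduct_sub, dotProduct_sub,
        dotProduct_comm z v]
      ring
    have hyy : ∑ j, (C i j) ^ 2 = y ⬝ᵥ y := by
      simp only [dotProduct]
      exact Finset.sum_congr rfl fun j _ => by rw [hyC j]; ring
    rw [hexp, hvv1, hvz, hzz] at hpos
    rw [hyy]
    linarith
  -- the substochastic matrix D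
  set D : Fin n → Fin d → ℝ := fun i j => (C i.castSucc j) ^ 2 with hD
  have hαcast : ∀ i : Fin n, α i.castSucc = β' i := by
    intro i
    have hi : ((i.castSucc : Fin (n + 1)) : ℕ) < n := i.isLt
    simp only [hα, dif_pos hi]
    congr 1
  have hsplitj : ∀ j : Fin d, ∑ i, α i * (C i j) ^ 2 = ∑ i : Fin n, β' i * D i j := by
    intro j
    rw [Fin.sum_univ_castSucc]
    rw [hClast j]
    simp only [hD]
    rw [show ∀ a : ℝ, a * (0:ℝ)^2 = 0 from fun a => by ring]
    rw [add_zero]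
    exact Finset.sum_congr rfl fun i _ => by rw [hαcast i]
  have hcol : ∀ j : Fin d, ∑ i : Fin n, D i j = 1 := by
    intro j
    have h1 : (Cᵀ * C) j j = 1 := by rw [hCtC]; simp [Matrix.one_apply]
    have h2 : ∑ i : Fin (n + 1), (C i j) ^ 2 = 1 := by
      rw [← h1]
      simp only [Matrix.mul_apply, Matrix.transpose_apply]
      exact Finset.sum_congr rfl fun i _ => by ring
    rw [← h2, Fin.sum_univ_castSucc, hClast j]
    simp [hD]
  have hrowD : ∀ i : Fin n, ∑ j, D i j ≤ 1 := by
    intro i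
    exact hrow i.castSucc
  have hkey := brockett_core hdn β' hβ_anti lam hlam_anti hlam_nonneg D
    (fun i j => sq_nonneg _) hcol hrowD
  -- put everything together
  rw [htrace, htrace, hX₀QX₀]
  have hrhs : ∑ j, Matrix.diagonal (fun j => β' (c0 j)) j j * lam j
      = ∑ j, lam j * β' (Fin.castLE hdn j) := by
    apply Finset.sum_congr rfl
    intro j _
    rw [Matrix.diagonal_apply_eq]
    ring
  rw [hrhs]
  have hlhs : ∑ j, (Xᵀ * Q * X) j j * lam j = ∑ j, lam j * (∑ i : Fin n, β' i * D i j) := by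
    apply Finset.sum_congr rfl
    intro j _
    rw [hdiag j, hsplitj j]
    ring
  rw [hlhs]
  exact hkey
end

section
/- Let B ∈ ℝ^{l×m} be such that B Bᵀ is invertible, let Z ∈ ℝ^{r×l}, let μ ≥ 0, and define Q = Bᵀ (B Bᵀ + μ Zᵀ Z)⁻¹ B. Then Q 𝟏 = 𝟏 if and only if there exists x ∈ ℝ^l such that Bᵀ x = 𝟏 and, if μ > 0, additionally Z x = 0. -/
open Matrix

lemma warp_aux_posdef (l m r : ℕ)
    (B : Matrix (Fin l) (Fin m) ℝ) (Z : Matrix (Fin r) (Fin l) ℝ)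
    (μ : ℝ) (hμ : 0 ≤ μ) (hB : IsUnit (B * Bᵀ)) :
    (B * Bᵀ + μ • (Zᵀ * Z)).PosDef := by
  have hdet : IsUnit (B * Bᵀ).det := (Matrix.isUnit_iff_isUnit_det _).mp hB
  refine posDef_iff_dotProduct_mulVec.mpr ⟨?_, ?_⟩
  · show _ᴴ = _
    simp [conjTranspose_add, conjTranspose_smul, conjTranspose_mul,
      conjTranspose_eq_transpose_of_trivial, Matrix.transpose_mul]
  · intro x hx
    have hBx : Bᵀ *ᵥ x ≠ 0 := by
      intro h
      apply hx
      have h1 : (B * Bᵀ) *ᵥ x = 0 := by rw [← mulVec_mulVec, h, mulVec_zero]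
      have := congrArg (fun v => (B * Bᵀ)⁻¹ *ᵥ v) h1
      simpa [mulVec_mulVec, Matrix.nonsing_inv_mul _ hdet] using this
    have key1 : x ⬝ᵥ ((B * Bᵀ) *ᵥ x) = (Bᵀ *ᵥ x) ⬝ᵥ (Bᵀ *ᵥ x) := by
      rw [← mulVec_mulVec, dotProduct_mulVec, ← mulVec_transpose]
    have key2 : x ⬝ᵥ ((Zᵀ * Z) *ᵥ x) = (Z *ᵥ x) ⬝ᵥ (Z *ᵥ x) := by
      rw [← mulVec_mulVec, dotProduct_mulVec, ← mulVec_transpose, transpose_transpose]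
    have h1 : 0 < (Bᵀ *ᵥ x) ⬝ᵥ (Bᵀ *ᵥ x) := by
      have := dotProduct_star_self_pos_iff (v := Bᵀ *ᵥ x) |>.mpr hBx
      simpa using this
    have h2 : 0 ≤ (Z *ᵥ x) ⬝ᵥ (Z *ᵥ x) := by
      have := dotProduct_star_self_nonneg (Z *ᵥ x)
      simpa using this
    show (0:ℝ) < star x ⬝ᵥ _
    simp only [star_trivial, add_mulVec, smul_mulVec, dotProduct_add, dotProduct_smul,
      smul_eq_mul, key1, key2]
    positivity

/-- With `Q = Bᵀ (B Bᵀ + μ Zᵀ Z)⁻¹ B`, `B Bᵀ` invertible and `μ ≥ 0`,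
`Q 𝟏 = 𝟏` if and only if there exists `x` with `Bᵀ x = 𝟏` and, if `μ > 0`,
additionally `Z x = 0`. -/
theorem warp_fixes_ones_iff (l m r : ℕ)
    (B : Matrix (Fin l) (Fin m) ℝ) (Z : Matrix (Fin r) (Fin l) ℝ)
    (μ : ℝ) (hμ : 0 ≤ μ) (hB : IsUnit (B * Bᵀ)) :
    (Bᵀ * (B * Bᵀ + μ • (Zᵀ * Z))⁻¹ * B) *ᵥ (fun _ => (1 : ℝ)) = (fun _ => (1 : ℝ)) ↔
    ∃ x : Fin l → ℝ, Bᵀ *ᵥ x = (fun _ => (1 : ℝ)) ∧ (0 < μ → Z *ᵥ x = 0) := by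
  set M := B * Bᵀ + μ • (Zᵀ * Z) with hMdef
  have hPD : M.PosDef := warp_aux_posdef l m r B Z μ hμ hB
  have hMdet : IsUnit M.det := (Matrix.isUnit_iff_isUnit_det _).mp hPD.isUnit
  have hMinv : M⁻¹ * M = 1 := Matrix.nonsing_inv_mul _ hMdet
  have hinvM : M * M⁻¹ = 1 := Matrix.mul_nonsing_inv _ hMdet
  constructor
  · intro hQ
    refine ⟨(M⁻¹ * B) *ᵥ (fun _ => (1 : ℝ)), ?_, ?_⟩
    · rw [mulVec_mulVec, ← Matrix.mul_assoc]
      exact hQ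
    · intro hμpos
      set x := (M⁻¹ * B) *ᵥ (fun _ => (1 : ℝ)) with hxdef
      have hBx : Bᵀ *ᵥ x = (fun _ => (1 : ℝ)) := by
        rw [hxdef, mulVec_mulVec, ← Matrix.mul_assoc]
        exact hQ
      have hMx : M *ᵥ x = B *ᵥ (fun _ => (1 : ℝ)) := by
        rw [hxdef, mulVec_mulVec, ← Matrix.mul_assoc, hinvM, Matrix.one_mul]
      have hBBx : (B * Bᵀ) *ᵥ x = B *ᵥ (fun _ => (1 : ℝ)) := by
        rw [← mulVec_mulVec, hBx]
      have hzero : μ • ((Zᵀ * Z) *ᵥ x) = 0 := by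
        have : (B * Bᵀ) *ᵥ x + μ • ((Zᵀ * Z) *ᵥ x) = B *ᵥ (fun _ => (1 : ℝ)) := by
          rw [← smul_mulVec, ← add_mulVec, ← hMdef, hMx]
        rw [hBBx] at this
        linear_combination (norm := module) this
      have hZZ : (Zᵀ * Z) *ᵥ x = 0 := by
        have := smul_eq_zero.mp hzero
        rcases this with h | h
        · exact absurd h (ne_of_gt hμpos)
        · exact h
      have : (Zᴴ * Z) *ᵥ x = 0 := by
        rwa [conjTranspose_eq_transpose_of_trivial]
      exact (conjTranspose_mul_self_mulVec_eq_zero Z x).mp this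
  · rintro ⟨x, hx1, hx2⟩
    have hMx : M *ᵥ x = B *ᵥ (fun _ => (1 : ℝ)) := by
      rcases lt_or_eq_of_le hμ with hpos | hzero
      · have hZx : (Zᵀ * Z) *ᵥ x = 0 := by
          rw [← mulVec_mulVec, hx2 hpos, mulVec_zero]
        rw [hMdef, add_mulVec, smul_mulVec, hZx, smul_zero, add_zero,
          ← mulVec_mulVec, hx1]
      · rw [hMdef, ← hzero]
        simp [add_mulVec, ← mulVec_mulVec, hx1]
    have : M⁻¹ *ᵥ (B *ᵥ (fun _ => (1 : ℝ))) = x := by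
      rw [← hMx, mulVec_mulVec, hMinv, one_mulVec]
    calc (Bᵀ * M⁻¹ * B) *ᵥ (fun _ => (1 : ℝ))
        = Bᵀ *ᵥ (M⁻¹ *ᵥ (B *ᵥ (fun _ => (1 : ℝ)))) := by
          rw [mulVec_mulVec, mulVec_mulVec, Matrix.mul_assoc]
      _ = Bᵀ *ᵥ x := by rw [this]
      _ = (fun _ => (1 : ℝ)) := hx1
end

section
/- For i = 1, …, n let B_i ∈ ℝ^{l_i×m} be such that B_i B_iᵀ is invertible, let Z_i ∈ ℝ^{r_i×l_i}, and let μ_i ≥ 0. Define Q_i = B_iᵀ (B_i B_iᵀ + μ_i Z_iᵀ Z_i)⁻¹ B_i, Q = ∑_{i=1}^{n} Q_i, and P = ∑_{i=1}^{n} (I_m − Q_i). Then the following statements are equivalent: (a) P 𝟏 = 0; (b) Q 𝟏 = n 𝟏; (c) Q_i 𝟏 = 𝟏 for every i; (d) the cost function S ↦ tr(S P Sᵀ) is invariant to translations, i.e. for every S ∈ ℝ^{d×m} and every t ∈ ℝ^d, tr((S + t 𝟏ᵀ) P (S + t 𝟏ᵀ)ᵀ) = tr(S P Sᵀ); (e)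 for every i there exists x ∈ ℝ^{l_i} such that B_iᵀ x = 𝟏 and, if μ_i > 0, additionally Z_i x = 0. -/
open Matrix

/-- The regularized projection matrix `Q = Bᵀ (B Bᵀ + μ Zᵀ Z)⁻¹ B` of a linear basis
warp with feature matrix `B`, regularization matrix `Z` and smoothing parameter `μ`. -/
noncomputable def warpQ {l m r : ℕ} (B : Matrix (Fin l) (Fin m) ℝ)
    (Z : Matrix (Fin r) (Fin l) ℝ) (μ : ℝ) : Matrix (Fin m) (Fin m) ℝ :=
  Bᵀ * (B * Bᵀ + μ • (Zᵀ * Z))⁻¹ * B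

namespace WarpAux

variable {l m r : ℕ} (B : Matrix (Fin l) (Fin m) ℝ) (Z : Matrix (Fin r) (Fin l) ℝ) (μ : ℝ)

/-- The matrix `A = B Bᵀ + μ Zᵀ Z`. -/
noncomputable def Amat : Matrix (Fin l) (Fin l) ℝ := B * Bᵀ + μ • (Zᵀ * Z)

lemma dot_self_nonneg {k : ℕ} (v : Fin k → ℝ) : 0 ≤ v ⬝ᵥ v :=
  Finset.sum_nonneg fun i _ => mul_self_nonneg (v i)

lemma Amat_transpose : (Amat B Z μ)ᵀ = Amat B Z μ := by
  simp [Amat, transpose_add, transpose_mul, Matrix.transpose_smul, Matrix.mul_assoc]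

lemma dot_Amat (_hμ : 0 ≤ μ) (y : Fin l → ℝ) :
    y ⬝ᵥ (Amat B Z μ *ᵥ y) =
      (Bᵀ *ᵥ y) ⬝ᵥ (Bᵀ *ᵥ y) + μ * ((Z *ᵥ y) ⬝ᵥ (Z *ᵥ y)) := by
  have h1 : (Bᵀ *ᵥ y) ⬝ᵥ (Bᵀ *ᵥ y) = y ⬝ᵥ ((B * Bᵀ) *ᵥ y) := by
    rw [dotProduct_mulVec, vecMul_transpose, mulVec_mulVec, dotProduct_comm]
  have h2 : (Z *ᵥ y) ⬝ᵥ (Z *ᵥ y) = y ⬝ᵥ ((Zᵀ * Z) *ᵥ y) := by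
    rw [dotProduct_mulVec, vecMul_mulVec, ← dotProduct_mulVec]
  rw [h1, h2, Amat, add_mulVec, dotProduct_add, smul_mulVec, dotProduct_smul,
    smul_eq_mul]

lemma isUnit_Amat (hB : IsUnit (B * Bᵀ)) (hμ : 0 ≤ μ) : IsUnit (Amat B Z μ) := by
  rw [← Matrix.mulVec_injective_iff_isUnit]
  intro x y hxy
  have key : ∀ v : Fin l → ℝ, Amat B Z μ *ᵥ v = 0 → v = 0 := by
    intro v hv
    have h0 : v ⬝ᵥ (Amat B Z μ *ᵥ v) = 0 := by rw [hv, dotProduct_zero]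
    rw [dot_Amat B Z μ hμ] at h0
    have hBv : (Bᵀ *ᵥ v) ⬝ᵥ (Bᵀ *ᵥ v) = 0 := by
      have := dot_self_nonneg (Bᵀ *ᵥ v)
      have := mul_nonneg hμ (dot_self_nonneg (Z *ᵥ v))
      linarith
    have hBv0 : Bᵀ *ᵥ v = 0 := dotProduct_self_eq_zero.mp hBv
    have : (B * Bᵀ) *ᵥ v = 0 := by rw [← mulVec_mulVec, hBv0, mulVec_zero]
    have hinj : Function.Injective ((B * Bᵀ).mulVec) :=
      Matrix.mulVec_injective_iff_isUnit.mpr hB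
    have := hinj (by simpa using this : (B * Bᵀ) *ᵥ v = (B * Bᵀ) *ᵥ 0)
    simpa using this
  have : Amat B Z μ *ᵥ (x - y) = 0 := by
    rw [mulVec_sub, hxy, sub_self]
  have := key _ this
  exact sub_eq_zero.mp this

lemma Amat_det (hB : IsUnit (B * Bᵀ)) (hμ : 0 ≤ μ) : IsUnit (Amat B Z μ).det :=
  (Matrix.isUnit_iff_isUnit_det _).mp (isUnit_Amat B Z μ hB hμ)

lemma warpQ_eq : warpQ B Z μ = Bᵀ * (Amat B Z μ)⁻¹ * B := rfl

lemma warpQ_transpose : (warpQ B Z μ)ᵀ = warpQ B Z μ := by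
  rw [warpQ_eq, transpose_mul, transpose_mul, transpose_transpose,
    transpose_nonsing_inv, Amat_transpose, Matrix.mul_assoc]

/-- Key identity. -/
lemma key_identity (hB : IsUnit (B * Bᵀ)) (hμ : 0 ≤ μ) (x : Fin m → ℝ) :
    x ⬝ᵥ x - x ⬝ᵥ (warpQ B Z μ *ᵥ x) =
      (x - Bᵀ *ᵥ ((Amat B Z μ)⁻¹ *ᵥ (B *ᵥ x))) ⬝ᵥ
        (x - Bᵀ *ᵥ ((Amat B Z μ)⁻¹ *ᵥ (B *ᵥ x))) +
      μ * ((Z *ᵥ ((Amat B Z μ)⁻¹ *ᵥ (B *ᵥ x))) ⬝ᵥ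
        (Z *ᵥ ((Amat B Z μ)⁻¹ *ᵥ (B *ᵥ x)))) := by
  set y := (Amat B Z μ)⁻¹ *ᵥ (B *ᵥ x) with hy
  have hAy : Amat B Z μ *ᵥ y = B *ᵥ x := by
    rw [hy, mulVec_mulVec, Matrix.mul_nonsing_inv _ (Amat_det B Z μ hB hμ), one_mulVec]
  have hQ : warpQ B Z μ *ᵥ x = Bᵀ *ᵥ y := by
    rw [warpQ_eq, Matrix.mul_assoc, ← mulVec_mulVec, ← mulVec_mulVec, hy]
  have hxBy : x ⬝ᵥ (Bᵀ *ᵥ y) = (B *ᵥ x) ⬝ᵥ y := by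
    rw [dotProduct_mulVec, vecMul_transpose]
  have hByx : (Bᵀ *ᵥ y) ⬝ᵥ x = (B *ᵥ x) ⬝ᵥ y := by
    rw [dotProduct_comm, hxBy]
  have hdA : (Bᵀ *ᵥ y) ⬝ᵥ (Bᵀ *ᵥ y) + μ * ((Z *ᵥ y) ⬝ᵥ (Z *ᵥ y)) =
      (B *ᵥ x) ⬝ᵥ y := by
    rw [← dot_Amat B Z μ hμ, hAy, dotProduct_comm]
  rw [hQ, sub_dotProduct, dotProduct_sub, dotProduct_sub, hxBy, hByx]
  linarith [hdA]

/-- Zero defect implies the existence statement. -/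
lemma zero_defect (hB : IsUnit (B * Bᵀ)) (hμ : 0 ≤ μ) (x : Fin m → ℝ)
    (h : x ⬝ᵥ x - x ⬝ᵥ (warpQ B Z μ *ᵥ x) = 0) :
    ∃ w : Fin l → ℝ, Bᵀ *ᵥ w = x ∧ (0 < μ → Z *ᵥ w = 0) := by
  set y := (Amat B Z μ)⁻¹ *ᵥ (B *ᵥ x) with hy
  rw [key_identity B Z μ hB hμ] at h
  have h1 := dot_self_nonneg (x - Bᵀ *ᵥ y)
  have h2 := dot_self_nonneg (Z *ᵥ y)
  have h2' := mul_nonneg hμ h2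
  have e1 : (x - Bᵀ *ᵥ y) ⬝ᵥ (x - Bᵀ *ᵥ y) = 0 := by rw [← hy] at h; linarith
  have e2 : μ * ((Z *ᵥ y) ⬝ᵥ (Z *ᵥ y)) = 0 := by rw [← hy] at h; linarith
  refine ⟨y, ?_, ?_⟩
  · have := dotProduct_self_eq_zero.mp e1
    have := sub_eq_zero.mp this
    exact this.symm
  · intro hμ0
    have : (Z *ᵥ y) ⬝ᵥ (Z *ᵥ y) = 0 := by
      rcases mul_eq_zero.mp e2 with h | h
      · exact absurd h (ne_of_gt hμ0)
      · exact h
    exact dotProduct_self_eq_zero.mp this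

/-- Existence implies `Q x = x`. -/
lemma exists_implies (hB : IsUnit (B * Bᵀ)) (hμ : 0 ≤ μ) (x : Fin m → ℝ)
    (w : Fin l → ℝ) (hw : Bᵀ *ᵥ w = x) (hZ : 0 < μ → Z *ᵥ w = 0) :
    warpQ B Z μ *ᵥ x = x := by
  have hAw : Amat B Z μ *ᵥ w = B *ᵥ x := by
    have hz : (μ • (Zᵀ * Z)) *ᵥ w = 0 := by
      rcases hμ.lt_or_eq with hpos | hzero
      · rw [smul_mulVec, ← mulVec_mulVec, hZ hpos, mulVec_zero, smul_zero]
      · rw [← hzero, zero_smul, zero_mulVec]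
    rw [Amat, add_mulVec, hz, add_zero, ← mulVec_mulVec, hw]
  have : (Amat B Z μ)⁻¹ *ᵥ (B *ᵥ x) = w := by
    rw [← hAw, mulVec_mulVec, Matrix.nonsing_inv_mul _ (Amat_det B Z μ hB hμ), one_mulVec]
  rw [warpQ_eq, Matrix.mul_assoc, ← mulVec_mulVec, ← mulVec_mulVec, this, hw]

end WarpAux

open WarpAux in
/-- equivalence of (a) `P 𝟏 = 0`, (b) `Q 𝟏 = n 𝟏`, (c) `Qᵢ 𝟏 = 𝟏` for
every `i`, (d) translation invariance of `S ↦ tr(S P Sᵀ)`, and (e) the existence,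
for every `i`, of `x` with `Bᵢᵀ x = 𝟏` and (`Zᵢ x = 0` if `μᵢ > 0`). -/
theorem warp_all_ones_tfae (n m : ℕ) (l r : Fin n → ℕ)
    (B : ∀ i, Matrix (Fin (l i)) (Fin m) ℝ)
    (Z : ∀ i, Matrix (Fin (r i)) (Fin (l i)) ℝ)
    (μ : Fin n → ℝ) (hμ : ∀ i, 0 ≤ μ i)
    (hB : ∀ i, IsUnit (B i * (B i)ᵀ)) :
    ((∑ i, ((1 : Matrix (Fin m) (Fin m) ℝ) - warpQ (B i) (Z i) (μ i))) *ᵥ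
        (fun _ => (1 : ℝ)) = 0 ↔
      (∑ i, warpQ (B i) (Z i) (μ i)) *ᵥ (fun _ => (1 : ℝ)) =
        (n : ℝ) • (fun _ => (1 : ℝ))) ∧
    ((∑ i, ((1 : Matrix (Fin m) (Fin m) ℝ) - warpQ (B i) (Z i) (μ i))) *ᵥ
        (fun _ => (1 : ℝ)) = 0 ↔
      ∀ i, warpQ (B i) (Z i) (μ i) *ᵥ (fun _ => (1 : ℝ)) = (fun _ => (1 : ℝ))) ∧
    ((∑ i, ((1 : Matrix (Fin m) (Fin m) ℝ) - warpQ (B i) (Z i) (μ i))) *ᵥ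
        (fun _ => (1 : ℝ)) = 0 ↔
      ∀ (d : ℕ) (S : Matrix (Fin d) (Fin m) ℝ) (t : Fin d → ℝ),
        ((S + vecMulVec t (fun _ => 1)) *
            (∑ i, ((1 : Matrix (Fin m) (Fin m) ℝ) - warpQ (B i) (Z i) (μ i))) *
            (S + vecMulVec t (fun _ => 1))ᵀ).trace =
          (S * (∑ i, ((1 : Matrix (Fin m) (Fin m) ℝ) - warpQ (B i) (Z i) (μ i))) *
            Sᵀ).trace) ∧
    ((∑ i, ((1 : Matrix (Fin m) (Fin m) ℝ) - warpQ (B i) (Z i) (μ i))) *ᵥ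
        (fun _ => (1 : ℝ)) = 0 ↔
      ∀ i, ∃ x : Fin (l i) → ℝ,
        (B i)ᵀ *ᵥ x = (fun _ => (1 : ℝ)) ∧ (0 < μ i → Z i *ᵥ x = 0)) := by
  classical
  set u : Fin m → ℝ := fun _ => (1 : ℝ) with hu
  set P : Matrix (Fin m) (Fin m) ℝ :=
    ∑ i, ((1 : Matrix (Fin m) (Fin m) ℝ) - warpQ (B i) (Z i) (μ i)) with hPdef
  -- helper : sum of matrices mulVec
  have sum_mv : ∀ (M : Fin n → Matrix (Fin m) (Fin m) ℝ) (v : Fin m → ℝ),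
      (∑ i, M i) *ᵥ v = ∑ i, M i *ᵥ v := by
    intro M v
    ext j
    simp [mulVec, dotProduct, Matrix.sum_apply, Finset.sum_apply, Finset.sum_mul]
    rw [Finset.sum_comm]
  have dot_sum : ∀ (v : Fin m → ℝ) (w : Fin n → Fin m → ℝ),
      v ⬝ᵥ (∑ i, w i) = ∑ i, v ⬝ᵥ (w i) := by
    intro v w
    simp [dotProduct, Finset.sum_apply, Finset.mul_sum]
    rw [Finset.sum_comm]
  have hPu : P *ᵥ u = ∑ i, (u - warpQ (B i) (Z i) (μ i) *ᵥ u) := by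
    rw [hPdef, sum_mv]
    exact Finset.sum_congr rfl fun i _ => by rw [sub_mulVec, one_mulVec]
  have nonneg_i : ∀ i, 0 ≤ u ⬝ᵥ u - u ⬝ᵥ (warpQ (B i) (Z i) (μ i) *ᵥ u) := by
    intro i
    rw [WarpAux.key_identity (B i) (Z i) (μ i) (hB i) (hμ i)]
    exact add_nonneg (WarpAux.dot_self_nonneg _)
      (mul_nonneg (hμ i) (WarpAux.dot_self_nonneg _))
  -- dot zero implies (e)
  have hdotE : u ⬝ᵥ (P *ᵥ u) = 0 →
      ∀ i, ∃ x : Fin (l i) → ℝ, (B i)ᵀ *ᵥ x = u ∧ (0 < μ i → Z i *ᵥ x = 0) := by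
    intro h i
    rw [hPu, dot_sum] at h
    have heach : ∀ j ∈ Finset.univ,
        u ⬝ᵥ (u - warpQ (B j) (Z j) (μ j) *ᵥ u) = 0 := by
      rw [← Finset.sum_eq_zero_iff_of_nonneg]
      · exact h
      · intro j _
        rw [dotProduct_sub]
        exact nonneg_i j
    have := heach i (Finset.mem_univ i)
    rw [dotProduct_sub] at this
    exact WarpAux.zero_defect (B i) (Z i) (μ i) (hB i) (hμ i) u this
  have hEC : (∀ i, ∃ x : Fin (l i) → ℝ,
        (B i)ᵀ *ᵥ x = u ∧ (0 < μ i → Z i *ᵥ x = 0)) →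
      ∀ i, warpQ (B i) (Z i) (μ i) *ᵥ u = u := by
    intro hE i
    obtain ⟨w, hw, hZ⟩ := hE i
    exact WarpAux.exists_implies (B i) (Z i) (μ i) (hB i) (hμ i) u w hw hZ
  have hCA : (∀ i, warpQ (B i) (Z i) (μ i) *ᵥ u = u) → P *ᵥ u = 0 := by
    intro hC
    rw [hPu]
    exact Finset.sum_eq_zero fun i _ => by rw [hC i, sub_self]
  have hAE : P *ᵥ u = 0 →
      ∀ i, ∃ x : Fin (l i) → ℝ, (B i)ᵀ *ᵥ x = u ∧ (0 < μ i → Z i *ᵥ x = 0) :=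
    fun hA => hdotE (by rw [hA, dotProduct_zero])
  have hAC : P *ᵥ u = 0 ↔ ∀ i, warpQ (B i) (Z i) (μ i) *ᵥ u = u :=
    ⟨fun h => hEC (hAE h), hCA⟩
  have hPt : Pᵀ = P := by
    rw [hPdef, transpose_sum]
    exact Finset.sum_congr rfl fun i _ => by
      rw [transpose_sub, transpose_one, WarpAux.warpQ_transpose]
  refine ⟨?_, ?_, ?_, ?_⟩
  · -- (a) ↔ (b)
    have : P *ᵥ u = (n : ℝ) • u - (∑ i, warpQ (B i) (Z i) (μ i)) *ᵥ u := by
      rw [hPu, Finset.sum_sub_distrib, sum_mv]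
      congr 1
      rw [Finset.sum_const, Finset.card_univ, Fintype.card_fin,
        Nat.cast_smul_eq_nsmul ℝ n u]
    rw [this, sub_eq_zero, eq_comm]
  · -- (a) ↔ (c)
    exact hAC
  · -- (a) ↔ (d)
    constructor
    · intro hA d S t
      have huP : u ᵥ* P = 0 := by
        rw [← hPt, vecMul_transpose]
        exact hA
      have hTP : vecMulVec t u * P = 0 := by
        ext j k
        have hv : ∑ i, u i * P i k = 0 := by
          have := congrFun huP k
          simpa [vecMul, dotProduct] using this
        simp [Matrix.mul_apply, vecMulVec_apply, mul_assoc, ← Finset.mul_sum, hv]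
      have hPT : P * (vecMulVec t u)ᵀ = 0 := by
        ext j k
        have hv : ∑ i, P j i * u i = 0 := by
          have := congrFun hA j
          simpa [mulVec, dotProduct] using this
        simp only [Matrix.mul_apply, transpose_apply, vecMulVec_apply]
        rw [show ∑ i, P j i * (t k * u i) = (∑ i, P j i * u i) * t k by
          rw [Finset.sum_mul]; exact Finset.sum_congr rfl fun i _ => by ring]
        rw [hv, zero_mul]
        rfl
      rw [Matrix.add_mul, hTP, add_zero, transpose_add, Matrix.mul_add,
        Matrix.mul_assoc S P (vecMulVec t u)ᵀ, hPT, Matrix.mul_zero, add_zero]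
    · intro hd
      have h1 := hd 1 0 (fun _ => (1 : ℝ))
      rw [zero_add, Matrix.zero_mul, Matrix.zero_mul, trace_zero] at h1
      -- compute the trace
      have htr : ((vecMulVec (fun _ => (1:ℝ)) u) * P *
          (vecMulVec (fun _ : Fin 1 => (1:ℝ)) u)ᵀ).trace = u ⬝ᵥ (P *ᵥ u) := by
        simp [trace, diag, Matrix.mul_apply, vecMulVec_apply, mulVec, dotProduct,
          Finset.sum_mul, Finset.mul_sum]
        rw [Finset.sum_comm]
        exact Finset.sum_congr rfl fun _ _ => Finset.sum_congr rfl fun _ _ => by ring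
      rw [htr] at h1
      exact hCA (hEC (hdotE h1))
  · -- (a) ↔ (e)
    exact ⟨hAE, fun hE => hCA (hEC hE)⟩
end

section
/- For i = 1, …, n let Γ_i ∈ ℝ^{m×m} be diagonal matrices with all diagonal entries in {0,1}, let B_i ∈ ℝ^{l_i×m}, Z_i ∈ ℝ^{r_i×l_i}, and μ_i ≥ 0 be such that B_i Γ_i B_iᵀ + μ_i Z_iᵀ Z_i is invertible. Define P_i = Γ_i − Γ_i B_iᵀ (B_i Γ_i B_iᵀ + μ_i Z_iᵀ Z_i)⁻¹ B_i Γ_i and P = ∑_{i=1}^{n} P_i. Then each P_i is positive semidefinite, and the following statements are equivalent: (a) P 𝟏 = 0; (b) P_i 𝟏 = 0 for every i; (c) for every i there exists x ∈ ℝ^{l_i} such that Γ_i B_iᵀ x = Γ_i 𝟏 and, if μ_i > 0, additionally Z_i x = 0. -/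
open Matrix

/-- The partial-shape matrix
`P = Γ − Γ Bᵀ (B Γ Bᵀ + μ Zᵀ Z)⁻¹ B Γ` of a linear basis warp with visibility
matrix `Γ = diagonal γ`, feature matrix `B`, regularization matrix `Z` and
smoothing parameter `μ`. -/
noncomputable def partialP {l m r : ℕ} (γ : Fin m → ℝ)
    (B : Matrix (Fin l) (Fin m) ℝ) (Z : Matrix (Fin r) (Fin l) ℝ) (μ : ℝ) :
    Matrix (Fin m) (Fin m) ℝ :=
  Matrix.diagonal γ -
    Matrix.diagonal γ * Bᵀ *
      (B * Matrix.diagonal γ * Bᵀ + μ • (Zᵀ * Z))⁻¹ * B * Matrix.diagonal γ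

section Aux

lemma dot_shift {a b : ℕ} (A : Matrix (Fin a) (Fin b) ℝ) (x : Fin a → ℝ) (y : Fin b → ℝ) :
    x ⬝ᵥ (A *ᵥ y) = (Aᵀ *ᵥ x) ⬝ᵥ y := by
  rw [Matrix.dotProduct_mulVec, Matrix.mulVec_transpose]

lemma dot_self_nonneg' {a : ℕ} (x : Fin a → ℝ) : 0 ≤ x ⬝ᵥ x :=
  Finset.sum_nonneg fun i _ => mul_self_nonneg _

lemma sum_mulVec' {n a : ℕ} (A : Fin n → Matrix (Fin a) (Fin a) ℝ) (v : Fin a → ℝ) :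
    (∑ i, A i) *ᵥ v = ∑ i, A i *ᵥ v := by
  ext j
  simp only [Matrix.mulVec, dotProduct, Finset.sum_apply, Matrix.sum_apply,
    Finset.sum_mul]
  rw [Finset.sum_comm]

lemma dot_sum' {n a : ℕ} (v : Fin a → ℝ) (w : Fin n → Fin a → ℝ) :
    v ⬝ᵥ (∑ i, w i) = ∑ i, v ⬝ᵥ w i := by
  simp only [dotProduct, Finset.sum_apply, Finset.mul_sum]
  rw [Finset.sum_comm]

variable {l m r : ℕ} (γ : Fin m → ℝ) (B : Matrix (Fin l) (Fin m) ℝ)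
  (Z : Matrix (Fin r) (Fin l) ℝ) (μ : ℝ)

local notation "G" => Matrix.diagonal γ
local notation "M" => B * Matrix.diagonal γ * Bᵀ + μ • (Zᵀ * Z)

lemma hGG (hγ : ∀ j, γ j = 0 ∨ γ j = 1) : G * G = G := by
  rw [Matrix.diagonal_mul_diagonal]
  have : (fun i => γ i * γ i) = γ := by
    funext j; rcases hγ j with h | h <;> simp [h]
  rw [this]

lemma hGT : (G)ᵀ = G := Matrix.diagonal_transpose γ

lemma hMT : (M)ᵀ = M := by
  simp [Matrix.transpose_add, Matrix.transpose_mul, Matrix.transpose_smul, Matrix.mul_assoc]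

lemma hNT : ((M)⁻¹)ᵀ = (M)⁻¹ := by
  rw [Matrix.transpose_nonsing_inv, hMT]

lemma hMNone (hinv : IsUnit (M)) : (M) * (M)⁻¹ = 1 :=
  Matrix.mul_nonsing_inv _ ((Matrix.isUnit_iff_isUnit_det _).mp hinv)

lemma hNMone (hinv : IsUnit (M)) : (M)⁻¹ * (M) = 1 :=
  Matrix.nonsing_inv_mul _ ((Matrix.isUnit_iff_isUnit_det _).mp hinv)

lemma dotG (hγ : ∀ j, γ j = 0 ∨ γ j = 1) (x y : Fin m → ℝ) :
    x ⬝ᵥ (G *ᵥ y) = (G *ᵥ x) ⬝ᵥ (G *ᵥ y) := by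
  conv_lhs => rw [show G *ᵥ y = G *ᵥ (G *ᵥ y) by
    rw [Matrix.mulVec_mulVec, hGG γ hγ]]
  rw [dot_shift, hGT]

/-- The basic vector formula: `P v = w - s` with `w = G v`, `u = M⁻¹ B w`, `s = G Bᵀ u`. -/
lemma Pv_eq (v : Fin m → ℝ) :
    partialP γ B Z μ *ᵥ v =
      G *ᵥ v - G *ᵥ (Bᵀ *ᵥ ((M)⁻¹ *ᵥ (B *ᵥ (G *ᵥ v)))) := by
  simp only [partialP, Matrix.sub_mulVec, Matrix.mulVec_mulVec, Matrix.mul_assoc]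

/-- The quadratic-form decomposition. -/
lemma quad_eq (hγ : ∀ j, γ j = 0 ∨ γ j = 1) (hinv : IsUnit (M)) (v : Fin m → ℝ) :
    v ⬝ᵥ (partialP γ B Z μ *ᵥ v) =
      (G *ᵥ v - G *ᵥ (Bᵀ *ᵥ ((M)⁻¹ *ᵥ (B *ᵥ (G *ᵥ v))))) ⬝ᵥ
        (G *ᵥ v - G *ᵥ (Bᵀ *ᵥ ((M)⁻¹ *ᵥ (B *ᵥ (G *ᵥ v))))) +
      μ * ((Z *ᵥ ((M)⁻¹ *ᵥ (B *ᵥ (G *ᵥ v)))) ⬝ᵥ (Z *ᵥ ((M)⁻¹ *ᵥ (B *ᵥ (G *ᵥ v))))) := by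
  set w : Fin m → ℝ := G *ᵥ v with hw
  set u : Fin l → ℝ := (M)⁻¹ *ᵥ (B *ᵥ w) with hu
  set s : Fin m → ℝ := G *ᵥ (Bᵀ *ᵥ u) with hs
  clear_value s; clear_value u; clear_value w
  have hGw : G *ᵥ w = w := by rw [hw, Matrix.mulVec_mulVec, hGG γ hγ]
  have hGs : G *ᵥ s = s := by rw [hs, Matrix.mulVec_mulVec, hGG γ hγ]
  have hMu : (M) *ᵥ u = B *ᵥ w := by
    rw [hu, Matrix.mulVec_mulVec, hMNone γ B Z μ hinv, Matrix.one_mulVec]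
  have h1 : v ⬝ᵥ w = w ⬝ᵥ w := by
    conv_lhs => rw [hw]
    rw [dotG γ hγ, ← hw]
  have h2 : v ⬝ᵥ s = w ⬝ᵥ s := by
    conv_lhs => rw [hs]
    rw [dotG γ hγ, ← hw, ← hs]
  have hsBu : s ⬝ᵥ (Bᵀ *ᵥ u) = s ⬝ᵥ s := by
    calc s ⬝ᵥ (Bᵀ *ᵥ u) = ((G)ᵀ *ᵥ s) ⬝ᵥ (Bᵀ *ᵥ u) := by rw [hGT, hGs]
      _ = s ⬝ᵥ (G *ᵥ (Bᵀ *ᵥ u)) := (dot_shift _ _ _).symm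
      _ = s ⬝ᵥ s := by rw [← hs]
  have h3 : w ⬝ᵥ s = s ⬝ᵥ s + μ * ((Z *ᵥ u) ⬝ᵥ (Z *ᵥ u)) := by
    have e1 : w ⬝ᵥ s = (B *ᵥ w) ⬝ᵥ u := by
      calc w ⬝ᵥ s = w ⬝ᵥ (G *ᵥ (Bᵀ *ᵥ u)) := by rw [← hs]
        _ = ((G)ᵀ *ᵥ w) ⬝ᵥ (Bᵀ *ᵥ u) := dot_shift _ _ _
        _ = w ⬝ᵥ (Bᵀ *ᵥ u) := by rw [hGT, hGw]
        _ = ((Bᵀ)ᵀ *ᵥ w) ⬝ᵥ u := dot_shift _ _ _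
        _ = (B *ᵥ w) ⬝ᵥ u := by rw [Matrix.transpose_transpose]
    have e3 : ((M) *ᵥ u) ⬝ᵥ u = s ⬝ᵥ s + μ * ((Z *ᵥ u) ⬝ᵥ (Z *ᵥ u)) := by
      rw [Matrix.add_mulVec, add_dotProduct, Matrix.smul_mulVec,
        smul_dotProduct, smul_eq_mul]
      congr 1
      · have key : (B * G * Bᵀ) *ᵥ u = B *ᵥ s := by
          rw [hs]
          simp only [Matrix.mulVec_mulVec, Matrix.mul_assoc]
        calc ((B * G * Bᵀ) *ᵥ u) ⬝ᵥ u
            = (B *ᵥ s) ⬝ᵥ u := by rw [key]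
          _ = u ⬝ᵥ (B *ᵥ s) := dotProduct_comm _ _
          _ = (Bᵀ *ᵥ u) ⬝ᵥ s := dot_shift _ _ _
          _ = s ⬝ᵥ (Bᵀ *ᵥ u) := dotProduct_comm _ _
          _ = s ⬝ᵥ s := hsBu
      · congr 1
        calc ((Zᵀ * Z) *ᵥ u) ⬝ᵥ u
            = (Zᵀ *ᵥ (Z *ᵥ u)) ⬝ᵥ u := by rw [Matrix.mulVec_mulVec]
          _ = u ⬝ᵥ (Zᵀ *ᵥ (Z *ᵥ u)) := dotProduct_comm _ _
          _ = ((Zᵀ)ᵀ *ᵥ u) ⬝ᵥ (Z *ᵥ u) := dot_shift _ _ _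
          _ = (Z *ᵥ u) ⬝ᵥ (Z *ᵥ u) := by rw [Matrix.transpose_transpose]
    rw [e1, ← hMu]
    exact e3
  rw [Pv_eq, ← hw, ← hu, ← hs]
  calc v ⬝ᵥ (w - s) = v ⬝ᵥ w - v ⬝ᵥ s := dotProduct_sub _ _ _
    _ = w ⬝ᵥ w - w ⬝ᵥ s := by rw [h1, h2]
    _ = (w - s) ⬝ᵥ (w - s) + (w ⬝ᵥ s - s ⬝ᵥ s) := by
        rw [sub_dotProduct, dotProduct_sub, dotProduct_sub,
          dotProduct_comm s w]
        ring
    _ = (w - s) ⬝ᵥ (w - s) + μ * ((Z *ᵥ u) ⬝ᵥ (Z *ᵥ u)) := by rw [h3]; ring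

lemma psd_partialP (hγ : ∀ j, γ j = 0 ∨ γ j = 1) (hμ : 0 ≤ μ) (hinv : IsUnit (M)) :
    (partialP γ B Z μ).PosSemidef := by
  refine Matrix.PosSemidef.of_dotProduct_mulVec_nonneg ?_ ?_
  · rw [Matrix.IsHermitian, Matrix.conjTranspose_eq_transpose_of_trivial]
    simp only [partialP, Matrix.transpose_sub, Matrix.transpose_mul,
      Matrix.transpose_nonsing_inv, Matrix.transpose_add, Matrix.transpose_smul, hGT,
      Matrix.transpose_transpose, Matrix.mul_assoc]
  · intro x
    rw [show star x = x from funext fun i => star_trivial _]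
    rw [quad_eq γ B Z μ hγ hinv x]
    exact add_nonneg (dot_self_nonneg' _) (mul_nonneg hμ (dot_self_nonneg' _))

lemma one_iff_exists (hγ : ∀ j, γ j = 0 ∨ γ j = 1) (hμ : 0 ≤ μ) (hinv : IsUnit (M))
    (v : Fin m → ℝ) :
    partialP γ B Z μ *ᵥ v = 0 ↔
      ∃ x : Fin l → ℝ, (G * Bᵀ) *ᵥ x = G *ᵥ v ∧ (0 < μ → Z *ᵥ x = 0) := by
  constructor
  · intro h
    refine ⟨(M)⁻¹ *ᵥ (B *ᵥ (G *ᵥ v)), ?_, ?_⟩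
    · have := (Pv_eq γ B Z μ v).symm.trans h
      rw [sub_eq_zero] at this
      rw [← Matrix.mulVec_mulVec, ← this]
    · intro hμpos
      have hq := quad_eq γ B Z μ hγ hinv v
      rw [h, dotProduct_zero] at hq
      have hws : G *ᵥ v - G *ᵥ (Bᵀ *ᵥ ((M)⁻¹ *ᵥ (B *ᵥ (G *ᵥ v)))) = 0 := by
        rw [← Pv_eq]; exact h
      rw [hws, zero_dotProduct, zero_add] at hq
      have : (Z *ᵥ ((M)⁻¹ *ᵥ (B *ᵥ (G *ᵥ v)))) ⬝ᵥ (Z *ᵥ ((M)⁻¹ *ᵥ (B *ᵥ (G *ᵥ v)))) = 0 := by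
        by_contra hne
        exact hne (by nlinarith [dot_self_nonneg' (Z *ᵥ ((M)⁻¹ *ᵥ (B *ᵥ (G *ᵥ v))))])
      exact dotProduct_self_eq_zero.mp this
  · rintro ⟨x, hx1, hx2⟩
    have hMx : (M) *ᵥ x = B *ᵥ (G *ᵥ v) := by
      rw [Matrix.add_mulVec, Matrix.smul_mulVec]
      have hterm2 : μ • ((Zᵀ * Z) *ᵥ x) = 0 := by
        rcases lt_or_eq_of_le hμ with hpos | hzero
        · rw [← Matrix.mulVec_mulVec, hx2 hpos, Matrix.mulVec_zero, smul_zero]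
        · rw [← hzero, zero_smul]
      rw [hterm2, add_zero, show B * G * Bᵀ = B * (G * Bᵀ) from Matrix.mul_assoc _ _ _,
        ← Matrix.mulVec_mulVec, hx1, Matrix.mulVec_mulVec]
    have hux : (M)⁻¹ *ᵥ (B *ᵥ (G *ᵥ v)) = x := by
      rw [← hMx, Matrix.mulVec_mulVec, hNMone γ B Z μ hinv, Matrix.one_mulVec]
    rw [Pv_eq, hux, sub_eq_zero, Matrix.mulVec_mulVec, hx1]

end Aux

/-- each `Pᵢ` is positive semidefinite, and (a) `P 𝟏 = 0`,
(b) `Pᵢ 𝟏 = 0` for every `i`, and (c) for every `i` there exists `x` with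
`Γᵢ Bᵢᵀ x = Γᵢ 𝟏` and (`Zᵢ x = 0` if `μᵢ > 0`), are equivalent. -/
theorem partial_warp_all_ones_tfae (n m : ℕ) (l r : Fin n → ℕ)
    (γ : Fin n → Fin m → ℝ) (hγ : ∀ i j, γ i j = 0 ∨ γ i j = 1)
    (B : ∀ i, Matrix (Fin (l i)) (Fin m) ℝ)
    (Z : ∀ i, Matrix (Fin (r i)) (Fin (l i)) ℝ)
    (μ : Fin n → ℝ) (hμ : ∀ i, 0 ≤ μ i)
    (hinv : ∀ i, IsUnit (B i * Matrix.diagonal (γ i) * (B i)ᵀ + μ i • ((Z i)ᵀ * Z i))) :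
    (∀ i, (partialP (γ i) (B i) (Z i) (μ i)).PosSemidef) ∧
    ((∑ i, partialP (γ i) (B i) (Z i) (μ i)) *ᵥ (fun _ => (1 : ℝ)) = 0 ↔
      ∀ i, partialP (γ i) (B i) (Z i) (μ i) *ᵥ (fun _ => (1 : ℝ)) = 0) ∧
    ((∑ i, partialP (γ i) (B i) (Z i) (μ i)) *ᵥ (fun _ => (1 : ℝ)) = 0 ↔
      ∀ i, ∃ x : Fin (l i) → ℝ,
        (Matrix.diagonal (γ i) * (B i)ᵀ) *ᵥ x =
          Matrix.diagonal (γ i) *ᵥ (fun _ => (1 : ℝ)) ∧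
        (0 < μ i → Z i *ᵥ x = 0)) := by
  have hpsd : ∀ i, (partialP (γ i) (B i) (Z i) (μ i)).PosSemidef :=
    fun i => psd_partialP (γ i) (B i) (Z i) (μ i) (hγ i) (hμ i) (hinv i)
  have hab : (∑ i, partialP (γ i) (B i) (Z i) (μ i)) *ᵥ (fun _ => (1 : ℝ)) = 0 ↔
      ∀ i, partialP (γ i) (B i) (Z i) (μ i) *ᵥ (fun _ => (1 : ℝ)) = 0 := by
    constructor
    · intro h i
      have hsum : ∑ j, (fun _ => (1 : ℝ)) ⬝ᵥ
          (partialP (γ j) (B j) (Z j) (μ j) *ᵥ (fun _ => (1 : ℝ))) = 0 := by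
        rw [← dot_sum', ← sum_mulVec', h, dotProduct_zero]
      have hnonneg : ∀ j ∈ Finset.univ, (0:ℝ) ≤ (fun _ => (1 : ℝ)) ⬝ᵥ
          (partialP (γ j) (B j) (Z j) (μ j) *ᵥ (fun _ => (1 : ℝ))) := by
        intro j _
        have := (hpsd j).dotProduct_mulVec_nonneg (fun _ => (1 : ℝ))
        rwa [show star (fun _ => (1:ℝ)) = (fun _ => (1:ℝ)) from
          funext fun i => star_trivial _] at this
      have hzero := (Finset.sum_eq_zero_iff_of_nonneg hnonneg).mp hsum i (Finset.mem_univ i)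
      have := (hpsd i).dotProduct_mulVec_zero_iff (fun _ => (1 : ℝ))
      rw [show star (fun _ => (1:ℝ)) = (fun _ : Fin m => (1:ℝ)) from
        funext fun i => star_trivial _] at this
      exact this.mp hzero
    · intro h
      rw [sum_mulVec']
      exact Finset.sum_eq_zero fun i _ => h i
  refine ⟨hpsd, hab, hab.trans ?_⟩
  constructor
  · intro h i
    exact (one_iff_exists (γ i) (B i) (Z i) (μ i) (hγ i) (hμ i) (hinv i) _).mp (h i)
  · intro h i
    exact (one_iff_exists (γ i) (B i) (Z i) (μ i) (hγ i) (hμ i) (hinv i) _).mpr (h i)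
end

section
/- Let Γ ∈ ℝ^{m×m} be a diagonal matrix with all diagonal entries in {0,1}, let B ∈ ℝ^{l×m}, Z ∈ ℝ^{r×l}, and μ ≥ 0 be such that B Γ Bᵀ + μ Zᵀ Z is invertible, and define P = Γ − Γ Bᵀ (B Γ Bᵀ + μ Zᵀ Z)⁻¹ B Γ. Then O ⪯ P ⪯ Γ ⪯ I_m. Consequently, for n such matrices P₁, …, P_n (with Γ_i, B_i, Z_i, μ_i respectively), the sum satisfies O ⪯ ∑_{i=1}^{n} P_i ⪯ n I_m. -/
open Matrix

/-- A positive semidefinite real matrix that is a unit is positive definite. -/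
lemma posDef_of_posSemidef_isUnit {k : Type*} [Fintype k] [DecidableEq k]
    {A : Matrix k k ℝ} (hA : A.PosSemidef) (hU : IsUnit A) : A.PosDef := by
  refine Matrix.PosDef.of_dotProduct_mulVec_pos hA.1 fun x hx => ?_
  rcases lt_or_eq_of_le (hA.dotProduct_mulVec_nonneg x) with h | h
  · exact h
  · exfalso
    have h0 : A *ᵥ x = 0 := (hA.dotProduct_mulVec_zero_iff x).mp h.symm
    have hinj := Matrix.mulVec_injective_iff_isUnit.mpr hU
    exact hx (hinj (by simpa using h0))

/-- A nonnegative scalar multiple of `ZᵀZ` is positive semidefinite. -/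
lemma posSemidef_smul_transpose_mul_self {p q : Type*} [Fintype p] [Fintype q]
    (Z : Matrix p q ℝ) {μ : ℝ} (hμ : 0 ≤ μ) : (μ • (Zᵀ * Z)).PosSemidef := by
  have h : (Real.sqrt μ • Z)ᴴ * (Real.sqrt μ • Z) = μ • (Zᵀ * Z) := by
    rw [conjTranspose_smul, conjTranspose_eq_transpose_of_trivial, Matrix.smul_mul,
      Matrix.mul_smul, smul_smul, star_trivial, Real.mul_self_sqrt hμ]
  exact h ▸ posSemidef_conjTranspose_mul_self _

lemma partialP_key {l m r : ℕ} (γ : Fin m → ℝ) (hγ : ∀ j, γ j = 0 ∨ γ j = 1)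
    (B : Matrix (Fin l) (Fin m) ℝ) (Z : Matrix (Fin r) (Fin l) ℝ)
    (μ : ℝ) (hμ : 0 ≤ μ)
    (hinv : IsUnit (B * Matrix.diagonal γ * Bᵀ + μ • (Zᵀ * Z))) :
    (partialP γ B Z μ).PosSemidef ∧
      (Matrix.diagonal γ - partialP γ B Z μ).PosSemidef ∧
      ((1 : Matrix (Fin m) (Fin m) ℝ) - Matrix.diagonal γ).PosSemidef := by
  set Γ : Matrix (Fin m) (Fin m) ℝ := Matrix.diagonal γ with hΓ
  set M : Matrix (Fin l) (Fin l) ℝ := B * Γ * Bᵀ + μ • (Zᵀ * Z) with hM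
  have hΓT : Γᵀ = Γ := Matrix.diagonal_transpose γ
  have hΓH : Γᴴ = Γ := by
    rw [conjTranspose_eq_transpose_of_trivial, hΓT]
  have hγγ : (fun j => γ j * γ j) = γ := funext fun j => by rcases hγ j with h | h <;> simp [h]
  have hΓΓ : Γ * Γ = Γ := by
    rw [hΓ, Matrix.diagonal_mul_diagonal, hγγ]
  -- (Γ Bᵀ)ᴴ = B Γ
  have hLT : (Γ * Bᵀ)ᴴ = B * Γ := by
    rw [conjTranspose_mul, conjTranspose_eq_transpose_of_trivial,
      conjTranspose_eq_transpose_of_trivial, transpose_transpose, hΓT]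
  -- M is positive semidefinite
  have hBΓB : (B * Γ * Bᵀ).PosSemidef := by
    have := posSemidef_conjTranspose_mul_self (Γ * Bᵀ)
    rwa [hLT, Matrix.mul_assoc, ← Matrix.mul_assoc Γ Γ Bᵀ, hΓΓ, ← Matrix.mul_assoc] at this
  have hMpsd : M.PosSemidef := hBΓB.add (posSemidef_smul_transpose_mul_self Z hμ)
  have hMpd : M.PosDef := posDef_of_posSemidef_isUnit hMpsd hinv
  haveI : Invertible M := hMpd.isUnit.invertible
  -- The big block matrix is PSD
  have hblock : (fromBlocks M (B * Γ) (B * Γ)ᴴ Γ).PosSemidef := by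
    have h1 := posSemidef_conjTranspose_mul_self (fromCols (Γ * Bᵀ) Γ)
    rw [conjTranspose_fromCols_eq_fromRows_conjTranspose, fromRows_mul_fromCols,
      hLT, hΓH] at h1
    have h2 := posSemidef_conjTranspose_mul_self
      (fromCols (Real.sqrt μ • Z) (0 : Matrix (Fin r) (Fin m) ℝ))
    rw [conjTranspose_fromCols_eq_fromRows_conjTranspose, fromRows_mul_fromCols] at h2
    have h12 := h1.add h2
    have hBG : (B * Γ)ᴴ = Γ * Bᵀ := by
      rw [conjTranspose_mul, hΓH, conjTranspose_eq_transpose_of_trivial]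
    rw [Matrix.fromBlocks_add] at h12
    simp only [Matrix.mul_zero, Matrix.zero_mul, Matrix.conjTranspose_zero, add_zero,
      zero_add] at h12
    have heq : (B * Γ * (Γ * Bᵀ) + (Real.sqrt μ • Z)ᴴ * (Real.sqrt μ • Z)) = M := by
      rw [hM]
      congr 1
      · rw [Matrix.mul_assoc, ← Matrix.mul_assoc Γ Γ Bᵀ, hΓΓ, ← Matrix.mul_assoc]
      · rw [conjTranspose_smul, conjTranspose_eq_transpose_of_trivial, Matrix.smul_mul,
          Matrix.mul_smul, smul_smul, star_trivial, Real.mul_self_sqrt hμ]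
    have hBΓΓ : B * Γ * Γ = B * Γ := by rw [Matrix.mul_assoc, hΓΓ]
    have hΓΓB : Γ * (Γ * Bᵀ) = Γ * Bᵀ := by rw [← Matrix.mul_assoc, hΓΓ]
    rwa [heq, hBΓΓ, hΓΓB, hΓΓ, ← hBG] at h12
  -- Schur complement: P is PSD
  have hSchur := (Matrix.PosDef.fromBlocks₁₁ (B * Γ) Γ hMpd).mp hblock
  have hBG : (B * Γ)ᴴ = Γ * Bᵀ := by
    rw [conjTranspose_mul, hΓH, conjTranspose_eq_transpose_of_trivial]
  have hPdef : partialP γ B Z μ = Γ - (B * Γ)ᴴ * M⁻¹ * (B * Γ) := by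
    rw [partialP, ← hΓ, ← hM, hBG, Matrix.mul_assoc (Γ * Bᵀ * M⁻¹) B Γ]
  refine ⟨by rw [hPdef]; exact hSchur, ?_, ?_⟩
  · have : Γ - partialP γ B Z μ = (Γ * Bᵀ) * M⁻¹ * (Γ * Bᵀ)ᴴ := by
      rw [hPdef, sub_sub_cancel, hBG, ← hLT]
    rw [this]
    exact (hMpd.inv).posSemidef.mul_mul_conjTranspose_same _
  · have h1 : (1 : Matrix (Fin m) (Fin m) ℝ) - Γ = Matrix.diagonal (fun j => 1 - γ j) := by
      rw [hΓ, ← Matrix.diagonal_one, Matrix.diagonal_sub]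
    rw [h1]
    refine Matrix.posSemidef_diagonal_iff.mpr fun j => ?_
    rcases hγ j with h | h <;> simp [h]

/-- for each warp, `O ⪯ P ⪯ Γ ⪯ I`; consequently the sum of `n`
such matrices satisfies `O ⪯ ∑ Pᵢ ⪯ n I`. -/
theorem partialP_psd_bounds (n m : ℕ) (l r : Fin n → ℕ)
    (γ : Fin n → Fin m → ℝ) (hγ : ∀ i j, γ i j = 0 ∨ γ i j = 1)
    (B : ∀ i, Matrix (Fin (l i)) (Fin m) ℝ)
    (Z : ∀ i, Matrix (Fin (r i)) (Fin (l i)) ℝ)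
    (μ : Fin n → ℝ) (hμ : ∀ i, 0 ≤ μ i)
    (hinv : ∀ i, IsUnit (B i * Matrix.diagonal (γ i) * (B i)ᵀ + μ i • ((Z i)ᵀ * Z i))) :
    (∀ i, (partialP (γ i) (B i) (Z i) (μ i)).PosSemidef ∧
      (Matrix.diagonal (γ i) - partialP (γ i) (B i) (Z i) (μ i)).PosSemidef ∧
      ((1 : Matrix (Fin m) (Fin m) ℝ) - Matrix.diagonal (γ i)).PosSemidef) ∧
    (∑ i, partialP (γ i) (B i) (Z i) (μ i)).PosSemidef ∧
    ((n : ℝ) • (1 : Matrix (Fin m) (Fin m) ℝ) -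
      ∑ i, partialP (γ i) (B i) (Z i) (μ i)).PosSemidef := by
  have key := fun i => partialP_key (γ i) (hγ i) (B i) (Z i) (μ i) (hμ i) (hinv i)
  refine ⟨key, ?_, ?_⟩
  · exact Finset.sum_induction _ _ (fun a b ha hb => ha.add hb) Matrix.PosSemidef.zero
      (fun i _ => (key i).1)
  · have hsum : ((n : ℝ) • (1 : Matrix (Fin m) (Fin m) ℝ) -
        ∑ i, partialP (γ i) (B i) (Z i) (μ i)) =
        ∑ i, ((1 : Matrix (Fin m) (Fin m) ℝ) - partialP (γ i) (B i) (Z i) (μ i)) := by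
      rw [Finset.sum_sub_distrib, Finset.sum_const, Finset.card_univ, Fintype.card_fin,
        Nat.cast_smul_eq_nsmul]
    rw [hsum]
    refine Finset.sum_induction _ _ (fun a b ha hb => ha.add hb) Matrix.PosSemidef.zero
      (fun i _ => ?_)
    have h1 := (key i).2.1
    have h2 := (key i).2.2
    have := h2.add h1
    have heq : (1 : Matrix (Fin m) (Fin m) ℝ) - Matrix.diagonal (γ i) +
        (Matrix.diagonal (γ i) - partialP (γ i) (B i) (Z i) (μ i)) =
        1 - partialP (γ i) (B i) (Z i) (μ i) := by abel
    rwa [heq] at this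
end

section
/- For i = 1, …, n let D_i ∈ ℝ^{d×m} with homogeneous representations D̃_i = [D_i; 𝟏ᵀ] such that each D̃_i D̃_iᵀ is invertible, and let Q = ∑_{i=1}^{n} D̃_iᵀ (D̃_i D̃_iᵀ)⁻¹ D̃_i. If each datum shape is replaced by a rigidly transformed shape D_i' = R_i D_i + t_i 𝟏ᵀ, where R_i ∈ ℝ^{d×d} are rotation matrices (R_iᵀ R_i = I_d) and t_i ∈ ℝ^d, then with D̃_i' = [D_i'; 𝟏ᵀ] the matrix Q' = ∑_{i=1}^{n} D̃_i'ᵀ (D̃_i' D̃_i'ᵀ)⁻¹ D̃_i' is well defined (each D̃_i' D̃_i'ᵀ is invertible) and Q' = Q. -/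
open Matrix

/-- Homogeneous representation `D̃ = [D; 𝟏ᵀ]` of a shape `D ∈ ℝ^{d×m}`. -/
def homog {d m : ℕ} (D : Matrix (Fin d) (Fin m) ℝ) :
    Matrix (Fin d ⊕ Fin 1) (Fin m) ℝ :=
  Matrix.fromRows D (Matrix.of fun _ _ => (1 : ℝ))

lemma proj_invariant {k m : Type*} [Fintype k] [DecidableEq k] [Fintype m]
    (A : Matrix k k ℝ)
    (hA : IsUnit A) (B : Matrix k m ℝ)
    (hB : IsUnit (B * Bᵀ)) :
    IsUnit ((A * B) * (A * B)ᵀ) ∧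
    (A * B)ᵀ * ((A * B) * (A * B)ᵀ)⁻¹ * (A * B) = Bᵀ * (B * Bᵀ)⁻¹ * B := by
  have hAT : IsUnit Aᵀ := (Matrix.isUnit_iff_isUnit_det _).mpr
    (by rw [det_transpose]; exact (Matrix.isUnit_iff_isUnit_det A).mp hA)
  have h1 : (A * B) * (A * B)ᵀ = A * (B * Bᵀ) * Aᵀ := by
    rw [transpose_mul]; simp [Matrix.mul_assoc]
  have hU : IsUnit ((A * B) * (A * B)ᵀ) := by
    rw [h1]; exact (hA.mul hB).mul hAT
  refine ⟨hU, ?_⟩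
  rw [h1, Matrix.mul_inv_rev, Matrix.mul_inv_rev, transpose_mul]
  have hAi : A⁻¹ * A = 1 := Matrix.nonsing_inv_mul A ((Matrix.isUnit_iff_isUnit_det A).mp hA)
  have hATi : Aᵀ * Aᵀ⁻¹ = 1 := Matrix.mul_nonsing_inv Aᵀ ((Matrix.isUnit_iff_isUnit_det Aᵀ).mp hAT)
  calc Bᵀ * Aᵀ * (Aᵀ⁻¹ * ((B * Bᵀ)⁻¹ * A⁻¹)) * (A * B)
      = Bᵀ * (Aᵀ * Aᵀ⁻¹) * (B * Bᵀ)⁻¹ * (A⁻¹ * A) * B := by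
        simp only [Matrix.mul_assoc]
    _ = Bᵀ * (B * Bᵀ)⁻¹ * B := by rw [hATi, hAi, Matrix.mul_one, Matrix.mul_one]

/-- replacing each datum shape by a rigidly transformed shape
`Dᵢ' = Rᵢ Dᵢ + tᵢ 𝟏ᵀ` keeps each `D̃ᵢ' D̃ᵢ'ᵀ` invertible and leaves the matrix
`Q = ∑ᵢ D̃ᵢᵀ (D̃ᵢ D̃ᵢᵀ)⁻¹ D̃ᵢ` unchanged. -/
theorem sum_homog_projection_rigid_invariant (n d m : ℕ)
    (D : Fin n → Matrix (Fin d) (Fin m) ℝ)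
    (hinv : ∀ i, IsUnit (homog (D i) * (homog (D i))ᵀ))
    (R : Fin n → Matrix (Fin d) (Fin d) ℝ) (hR : ∀ i, (R i)ᵀ * R i = 1)
    (t : Fin n → Fin d → ℝ)
    (D' : Fin n → Matrix (Fin d) (Fin m) ℝ)
    (hD' : ∀ i, D' i = R i * D i + vecMulVec (t i) (fun _ => 1)) :
    (∀ i, IsUnit (homog (D' i) * (homog (D' i))ᵀ)) ∧
    (∑ i, (homog (D' i))ᵀ * (homog (D' i) * (homog (D' i))ᵀ)⁻¹ * homog (D' i)) =
      (∑ i, (homog (D i))ᵀ * (homog (D i) * (homog (D i))ᵀ)⁻¹ * homog (D i)) := by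
  have hAunit : ∀ i, IsUnit
      (fromBlocks (R i) (Matrix.of fun r (_ : Fin 1) => t i r) 0 1 :
        Matrix (Fin d ⊕ Fin 1) (Fin d ⊕ Fin 1) ℝ) := by
    intro i
    rw [Matrix.isUnit_iff_isUnit_det, det_fromBlocks_zero₂₁, det_one, mul_one]
    exact (Matrix.isUnit_iff_isUnit_det (R i)).mp
      ⟨⟨R i, (R i)ᵀ, mul_eq_one_comm.mp (hR i), hR i⟩, rfl⟩
  have hhom : ∀ i, homog (D' i) =
      (fromBlocks (R i) (Matrix.of fun r (_ : Fin 1) => t i r) 0 1) * homog (D i) := by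
    intro i
    rw [homog, homog, fromBlocks_mul_fromRows, hD' i]
    ext (r | r) c <;> simp [mul_apply, vecMulVec]
  have key := fun i => proj_invariant _ (hAunit i) (homog (D i)) (hinv i)
  constructor
  · intro i; rw [hhom i]; exact (key i).1
  · apply Finset.sum_congr rfl
    intro i _
    rw [hhom i]; exact (key i).2
end

section
/- Let Q be an m×m real symmetric positive semidefinite matrix with Q 𝟏 = n 𝟏 for some n > 0, let d ≤ m − 1, let Λ = diag(λ₁, …, λ_d) with λ₁ ≥ λ₂ ≥ … ≥ λ_d ≥ 0, and let ν ≥ n/m. Then the hard-constrained and soft-constrained problems have the same optimal value: sup { tr(S (Q − ν 𝟏 𝟏ᵀ) Sᵀ) : S ∈ ℝ^{d×m}, S Sᵀ = Λ } = sup { tr(S Q Sᵀ) : S ∈ ℝ^{d×m}, S Sᵀ = Λ, S 𝟏 = 0 }. -/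
open Matrix

set_option linter.unusedSectionVars false
set_option maxHeartbeats 1000000
section helpers
variable {a b c : Type*} [Fintype a] [Fintype b] [Fintype c]

lemma myMulVMV (M : Matrix a b ℝ) (x : b → ℝ) (y : c → ℝ) :
    M * vecMulVec x y = vecMulVec (M *ᵥ x) y := by
  ext i j
  simp [mul_apply, vecMulVec_apply, mulVec, dotProduct, Finset.sum_mul, mul_assoc]

lemma myTransVMV (x : a → ℝ) (y : b → ℝ) : (vecMulVec x y)ᵀ = vecMulVec y x := by
  ext i j; simp [vecMulVec_apply, mul_comm]

lemma myVMVMul (M : Matrix b c ℝ) (x : a → ℝ) (y : b → ℝ) :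
    vecMulVec x y * M = vecMulVec x (Mᵀ *ᵥ y) := by
  have h : vecMulVec x y * M = ((Mᵀ) * (vecMulVec x y)ᵀ)ᵀ := by
    rw [transpose_mul, transpose_transpose, transpose_transpose]
  rw [h, myTransVMV, myMulVMV, myTransVMV]

lemma myVMVVMV (x : a → ℝ) (y : b → ℝ) (z : b → ℝ) (w : c → ℝ) :
    vecMulVec x y * vecMulVec z w = (y ⬝ᵥ z) • vecMulVec x w := by
  ext i j
  simp only [mul_apply, vecMulVec_apply, dotProduct, Matrix.smul_apply, smul_eq_mul, Finset.sum_mul]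
  exact Finset.sum_congr rfl fun k _ => by ring

lemma myTraceVMV (x : a → ℝ) (y : a → ℝ) : (vecMulVec x y).trace = x ⬝ᵥ y := by
  simp [trace, Matrix.diag, vecMulVec_apply, dotProduct]

lemma myVMVmulVec (x : a → ℝ) (y : b → ℝ) (z : b → ℝ) :
    vecMulVec x y *ᵥ z = (y ⬝ᵥ z) • x := by
  ext i
  simp only [mulVec, vecMulVec_apply, dotProduct, Pi.smul_apply, smul_eq_mul]
  rw [Finset.sum_mul]
  exact Finset.sum_congr rfl fun k _ => by ring

lemma myVMVzero (y : b → ℝ) : vecMulVec (0 : a → ℝ) y = 0 := by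
  ext i j; simp [vecMulVec_apply]

lemma myConjT (M : Matrix a b ℝ) : Mᴴ = Mᵀ := by
  ext i j; simp [conjTranspose_apply]

end helpers

lemma exchange {m d : ℕ} (hd : d + 1 ≤ m)
    (Q : Matrix (Fin m) (Fin m) ℝ) (hQ : Q.PosSemidef)
    (lam : Fin d → ℝ) (hlam : ∀ j, 0 ≤ lam j)
    (B : Matrix (Fin d) (Fin m) ℝ) (x : Fin d → ℝ)
    (hB1 : B *ᵥ (fun _ => (1:ℝ)) = 0)
    (hBB : B * Bᵀ = Matrix.diagonal lam - ((m:ℝ)⁻¹) • vecMulVec x x) :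
    ∃ S : Matrix (Fin d) (Fin m) ℝ, S * Sᵀ = Matrix.diagonal lam ∧
      S *ᵥ (fun _ => (1:ℝ)) = 0 ∧ (B * Q * Bᵀ).trace ≤ (S * Q * Sᵀ).trace := by
  have hm : 0 < m := by omega
  have hmR : (0:ℝ) < m := by exact_mod_cast hm
  set u : Fin m → ℝ := fun _ => (1:ℝ) with hu
  have hQt : Qᵀ = Q := by rw [← myConjT]; exact hQ.1
  have hQform : ∀ w : Fin m → ℝ, 0 ≤ w ⬝ᵥ (Q *ᵥ w) := fun w => by
    simpa using hQ.dotProduct_mulVec_nonneg w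
  by_cases hker : ∃ w : Fin m → ℝ, w ≠ 0 ∧ B *ᵥ w = 0 ∧ u ⬝ᵥ w = 0
  · -- rank-one completion case
    obtain ⟨w0, hw0ne, hw0B, hw0u⟩ := hker
    have hdp0 : 0 ≤ w0 ⬝ᵥ w0 := Finset.sum_nonneg fun i _ => mul_self_nonneg _
    have hdpne : w0 ⬝ᵥ w0 ≠ 0 := fun h => hw0ne (dotProduct_self_eq_zero.mp h)
    have hdppos : 0 < w0 ⬝ᵥ w0 := lt_of_le_of_ne hdp0 (Ne.symm hdpne)
    set r : ℝ := Real.sqrt ((m:ℝ) * (w0 ⬝ᵥ w0)) with hr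
    have hrr : r * r = (m:ℝ) * (w0 ⬝ᵥ w0) := Real.mul_self_sqrt (by positivity)
    have hrne : r ≠ 0 := by
      intro h; rw [h, mul_zero] at hrr; exact (by positivity : (0:ℝ) < (m:ℝ) * (w0 ⬝ᵥ w0)).ne' hrr.symm
    set w : Fin m → ℝ := r⁻¹ • w0 with hw
    have hww : w ⬝ᵥ w = (m:ℝ)⁻¹ := by
      rw [hw, smul_dotProduct, dotProduct_smul, smul_eq_mul, smul_eq_mul]
      field_simp
      nlinarith [hrr]
    have hBw : B *ᵥ w = 0 := by rw [hw, mulVec_smul, hw0B, smul_zero]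
    have hwu : w ⬝ᵥ u = 0 := by
      rw [hw, smul_dotProduct, dotProduct_comm, hw0u, smul_zero]
    set V : Matrix (Fin d) (Fin m) ℝ := vecMulVec x w with hV
    set τ : ℝ := (V * Q * Bᵀ).trace with hτ
    set s : ℝ := if 0 ≤ τ then 1 else -1 with hs
    have hs2 : s * s = 1 := by rw [hs]; split <;> norm_num
    have hsτ : 0 ≤ s * τ := by
      rw [hs]; split <;> rename_i h
      · simpa using h
      · simp; linarith [not_le.mp h]
    refine ⟨B + s • V, ?_, ?_, ?_⟩
    · have hBVt : B * Vᵀ = 0 := by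
        rw [hV, myTransVMV, myMulVMV, hBw, myVMVzero]
      have hVBt : V * Bᵀ = 0 := by
        have : (B * Vᵀ)ᵀ = V * Bᵀ := by rw [transpose_mul, transpose_transpose]
        rw [← this, hBVt, transpose_zero]
      have hVVt : V * Vᵀ = (m:ℝ)⁻¹ • vecMulVec x x := by
        rw [hV, myTransVMV, myVMVVMV, hww]
      rw [transpose_add, transpose_smul, Matrix.add_mul, Matrix.mul_add, Matrix.mul_add]
      simp only [Matrix.smul_mul, Matrix.mul_smul, smul_smul]
      rw [hBB, hBVt, hVBt, hVVt, hs2, one_smul]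
      simp only [smul_zero, add_zero, zero_add]
      rw [sub_add_cancel]
    · rw [add_mulVec, hB1, smul_mulVec, hV, myVMVmulVec, hwu, zero_smul, smul_zero,
        add_zero]
    · have hBQVt : (B * Q * Vᵀ).trace = τ := by
        have h1 : (B * Q * Vᵀ)ᵀ = V * Q * Bᵀ := by
          rw [transpose_mul, transpose_mul, transpose_transpose, hQt, Matrix.mul_assoc]
        rw [← trace_transpose, h1, hτ]
      have hVQVt : (V * Q * Vᵀ).trace = ((Q *ᵥ w) ⬝ᵥ w) * (x ⬝ᵥ x) := by
        rw [hV, myTransVMV, myVMVMul, hQt, myVMVVMV, trace_smul, myTraceVMV, smul_eq_mul]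
      have hVQV0 : 0 ≤ (V * Q * Vᵀ).trace := by
        rw [hVQVt]
        exact mul_nonneg (by rw [dotProduct_comm]; exact hQform w)
          (Finset.sum_nonneg fun i _ => mul_self_nonneg _)
      have hexp : ((B + s • V) * Q * (B + s • V)ᵀ).trace
          = (B * Q * Bᵀ).trace + s * τ + s * τ + (s * s) * (V * Q * Vᵀ).trace := by
        rw [transpose_add, transpose_smul]
        simp only [Matrix.mul_add, Matrix.add_mul, Matrix.smul_mul, Matrix.mul_smul, smul_smul]
        simp only [trace_add, trace_smul, smul_eq_mul]
        rw [hBQVt, ← hτ]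
        ring
      rw [hexp, hs2, one_mul]
      linarith
  · -- polar decomposition case: B * Bᵀ is invertible
    push_neg at hker
    -- the linear map w ↦ (B *ᵥ w, u ⬝ᵥ w) is injective, hence bijective
    set uL : (Fin m → ℝ) →ₗ[ℝ] ℝ :=
      { toFun := fun w => u ⬝ᵥ w
        map_add' := fun p q => dotProduct_add u p q
        map_smul' := fun c p => by simp [dotProduct_smul] } with huL
    set L : (Fin m → ℝ) →ₗ[ℝ] (Fin d → ℝ) × ℝ := LinearMap.prod B.mulVecLin uL with hL
    have hLinj : Function.Injective L := by
      rw [← LinearMap.ker_eq_bot, LinearMap.ker_eq_bot']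
      intro p hp
      have h1 : B *ᵥ p = 0 := congrArg Prod.fst hp
      have h2 : u ⬝ᵥ p = 0 := congrArg Prod.snd hp
      by_contra hpne
      exact hker p hpne h1 h2
    have hrk : Module.finrank ℝ (Fin m → ℝ) = Module.finrank ℝ ((Fin d → ℝ) × ℝ) := by
      have hle := LinearMap.finrank_le_finrank_of_injective hLinj
      rw [Module.finrank_fin_fun, Module.finrank_prod, Module.finrank_fin_fun,
        Module.finrank_self] at hle ⊢
      omega
    have hLsurj : Function.Surjective L :=
      (LinearMap.injective_iff_surjective_of_finrank_eq_finrank hrk).mp hLinj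
    set G : Matrix (Fin d) (Fin d) ℝ := B * Bᵀ with hG
    have hGz : ∀ z : Fin d → ℝ, G *ᵥ z = 0 → z = 0 := by
      intro z hz
      have hp : (z ᵥ* B) ⬝ᵥ (z ᵥ* B) = 0 := by
        have h1 : (z ᵥ* B) ⬝ᵥ (z ᵥ* B) = z ⬝ᵥ (G *ᵥ z) := by
          rw [hG, ← mulVec_mulVec, dotProduct_mulVec, ← mulVec_transpose]
        rw [h1, hz, dotProduct_zero]
      have hzB : z ᵥ* B = 0 := dotProduct_self_eq_zero.mp hp
      obtain ⟨v, hv⟩ := hLsurj (z, 0)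
      have hv1 : B *ᵥ v = z := congrArg Prod.fst hv
      have hzz : z ⬝ᵥ z = 0 := by
        calc z ⬝ᵥ z = z ⬝ᵥ (B *ᵥ v) := by rw [hv1]
          _ = (z ᵥ* B) ⬝ᵥ v := dotProduct_mulVec z B v
          _ = 0 := by rw [hzB, zero_dotProduct]
      exact dotProduct_self_eq_zero.mp hzz
    have hGunit : IsUnit G := by
      rw [← Matrix.mulVec_injective_iff_isUnit]
      have : LinearMap.ker G.mulVecLin = ⊥ := LinearMap.ker_eq_bot'.mpr fun z hz => hGz z hz
      exact LinearMap.ker_eq_bot.mp this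
    have hGdet : IsUnit G.det := (Matrix.isUnit_iff_isUnit_det G).mp hGunit
    have hGpsd : G.PosSemidef := by
      have := Matrix.posSemidef_self_mul_conjTranspose B
      rwa [myConjT] at this
    set sq : Matrix (Fin d) (Fin d) ℝ := (open scoped MatrixOrder in CFC.sqrt G) with hsq
    have hsqmul : sq * sq = G := by
      open scoped MatrixOrder in exact CFC.sqrt_mul_sqrt_self G hGpsd.nonneg
    have hsqT : sqᵀ = sq := by rw [← myConjT]; open scoped MatrixOrder in exact (CFC.sqrt_nonneg G).posSemidef.1
    have hsqdet : IsUnit sq.det := by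
      have : sq.det * sq.det = G.det := by rw [← det_mul, hsqmul]
      exact isUnit_of_mul_isUnit_left (this ▸ hGdet)
    set N : Matrix (Fin d) (Fin d) ℝ := sq⁻¹ with hN
    have hNsq : N * sq = 1 := nonsing_inv_mul sq hsqdet
    have hsqN : sq * N = 1 := mul_nonsing_inv sq hsqdet
    have hNT : Nᵀ = N := by rw [hN, transpose_nonsing_inv, hsqT]
    set D : Matrix (Fin d) (Fin d) ℝ := diagonal (fun i => Real.sqrt (lam i)) with hD
    have hDT : Dᵀ = D := diagonal_transpose _
    have hDD : D * D = diagonal lam := by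
      rw [hD, diagonal_mul_diagonal]
      exact congrArg diagonal (funext fun i => Real.mul_self_sqrt (hlam i))
    refine ⟨D * N * B, ?_, ?_, ?_⟩
    · calc D * N * B * (D * N * B)ᵀ
          = D * (N * ((B * Bᵀ) * (N * D))) := by
            simp only [transpose_mul, hNT, hDT, Matrix.mul_assoc]
        _ = D * ((N * sq) * ((sq * N) * D)) := by
            rw [← hG, ← hsqmul]; simp only [Matrix.mul_assoc]
        _ = diagonal lam := by rw [hNsq, hsqN, Matrix.one_mul, Matrix.one_mul, hDD]
    · rw [← Matrix.mulVec_mulVec, hB1, mulVec_zero]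
    · set R : Matrix (Fin d) (Fin d) ℝ := N * (B * Q * Bᵀ) * N with hR
      have hRpsd : R.PosSemidef := by
        have h1 := hQ.mul_mul_conjTranspose_same B
        rw [myConjT] at h1
        have h2 := h1.mul_mul_conjTranspose_same N
        rwa [myConjT, hNT] at h2
      have key1 : (D * N * B * Q * (D * N * B)ᵀ).trace = (R * diagonal lam).trace := by
        have h1 : D * N * B * Q * (D * N * B)ᵀ = D * (R * D) := by
          rw [hR]; simp only [transpose_mul, hNT, hDT, Matrix.mul_assoc]
        rw [h1, trace_mul_comm, Matrix.mul_assoc, hDD]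
      have key2 : (R * G).trace = (B * Q * Bᵀ).trace := by
        have h2 : R * G = N * ((B * Q * Bᵀ) * ((N * sq) * sq)) := by
          rw [hR, ← hsqmul]; simp only [Matrix.mul_assoc]
        rw [h2, hNsq, Matrix.one_mul, trace_mul_comm, Matrix.mul_assoc, hsqN, Matrix.mul_one]
      have key3 : (R * diagonal lam).trace
          = (R * G).trace + (m:ℝ)⁻¹ * (x ⬝ᵥ (R *ᵥ x)) := by
        have hdiag : Matrix.diagonal lam = G + (m:ℝ)⁻¹ • vecMulVec x x := by
          rw [hBB, sub_add_cancel]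
        rw [hdiag, Matrix.mul_add, trace_add, Matrix.mul_smul, trace_smul, myMulVMV,
          myTraceVMV, dotProduct_comm, smul_eq_mul]
      have hnn : 0 ≤ x ⬝ᵥ (R *ᵥ x) := by simpa using hRpsd.dotProduct_mulVec_nonneg x
      have hmi : (0:ℝ) ≤ (m:ℝ)⁻¹ := by positivity
      rw [key1, key3, key2]
      nlinarith [mul_nonneg hmi hnn]


lemma myVMVsmulL (c : ℝ) (x : a → ℝ) (y : b → ℝ) [Fintype a] [Fintype b] :
    vecMulVec (c • x) y = c • vecMulVec x y := by
  ext i j; simp [vecMulVec_apply, mul_assoc]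

lemma myVMVsmulR (c : ℝ) (x : a → ℝ) (y : b → ℝ) [Fintype a] [Fintype b] :
    vecMulVec x (c • y) = c • vecMulVec x y := by
  ext i j; simp [vecMulVec_apply]; ring

lemma decompose {m d : ℕ} (hm : 0 < m)
    (Q : Matrix (Fin m) (Fin m) ℝ) (hQ : Q.PosSemidef) (n ν : ℝ)
    (hQ1 : Q *ᵥ (fun _ => (1:ℝ)) = n • (fun _ => (1:ℝ)))
    (lam : Fin d → ℝ) (S : Matrix (Fin d) (Fin m) ℝ)
    (hSS : S * Sᵀ = Matrix.diagonal lam) :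
    ∃ (B : Matrix (Fin d) (Fin m) ℝ) (x : Fin d → ℝ),
      B *ᵥ (fun _ => (1:ℝ)) = 0 ∧
      B * Bᵀ = Matrix.diagonal lam - ((m:ℝ)⁻¹) • vecMulVec x x ∧
      (S * (Q - ν • vecMulVec (fun _ => (1:ℝ)) (fun _ => (1:ℝ))) * Sᵀ).trace
        = (B * Q * Bᵀ).trace + ((n / m) - ν) * (x ⬝ᵥ x) ∧
      0 ≤ x ⬝ᵥ x := by
  have hmR : (0:ℝ) < m := by exact_mod_cast hm
  set u : Fin m → ℝ := fun _ => (1:ℝ) with hu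
  have hQt : Qᵀ = Q := by rw [← myConjT]; exact hQ.1
  set x : Fin d → ℝ := S *ᵥ u with hx
  set c : ℝ := (m:ℝ)⁻¹ with hc
  set B : Matrix (Fin d) (Fin m) ℝ := S - c • vecMulVec x u with hB
  have huu : u ⬝ᵥ u = (m:ℝ) := by
    simp [hu, dotProduct]
  have hccm : c * c * (m:ℝ) = c := by rw [hc]; field_simp
  have h1 : S * vecMulVec u x = vecMulVec x x := by rw [myMulVMV, ← hx]
  have h2 : vecMulVec x u * Sᵀ = vecMulVec x x := by
    rw [myVMVMul, transpose_transpose, ← hx]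
  have h3 : vecMulVec x u * vecMulVec u x = (m:ℝ) • vecMulVec x x := by
    rw [myVMVVMV, huu]
  have hBt : Bᵀ = Sᵀ - c • vecMulVec u x := by
    rw [hB, transpose_sub, transpose_smul, myTransVMV]
  have hB1 : B *ᵥ u = 0 := by
    rw [hB, sub_mulVec, smul_mulVec, myVMVmulVec, huu, ← hx, hc]
    ext i
    simp only [Pi.sub_apply, Pi.smul_apply, smul_eq_mul, Pi.zero_apply]
    field_simp
    ring
  have hBB : B * Bᵀ = Matrix.diagonal lam - c • vecMulVec x x := by
    calc B * Bᵀ = (S - c • vecMulVec x u) * (Sᵀ - c • vecMulVec u x) := by rw [← hB, ← hBt]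
      _ = S * Sᵀ - c • (S * vecMulVec u x) - c • (vecMulVec x u * Sᵀ)
            + (c * c) • (vecMulVec x u * vecMulVec u x) := by
          simp only [Matrix.sub_mul, Matrix.mul_sub, Matrix.smul_mul, Matrix.mul_smul,
            smul_smul, smul_sub]
          abel
      _ = Matrix.diagonal lam - c • vecMulVec x x - c • vecMulVec x x
            + (c * c * (m:ℝ)) • vecMulVec x x := by
          rw [hSS, h1, h2, h3, smul_smul]
      _ = Matrix.diagonal lam - c • vecMulVec x x := by
          rw [hccm]; abel
  refine ⟨B, x, hB1, hBB, ?_, Finset.sum_nonneg fun i _ => mul_self_nonneg _⟩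
  -- trace identity
  have hSQu : (S * Q) *ᵥ u = n • x := by
    rw [← Matrix.mulVec_mulVec, hQ1, mulVec_smul, ← hx]
  have hQvux : S * Q * vecMulVec u x = n • vecMulVec x x := by
    rw [myMulVMV, hSQu, myVMVsmulL]
  have hvxuQ : vecMulVec x u * Q = n • vecMulVec x u := by
    rw [myVMVMul, hQt, hQ1, myVMVsmulR]
  have hterm2 : vecMulVec x u * Q * Sᵀ = n • vecMulVec x x := by
    rw [hvxuQ, Matrix.smul_mul, h2]
  have hterm3 : vecMulVec x u * Q * vecMulVec u x = (n * (m:ℝ)) • vecMulVec x x := by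
    rw [hvxuQ, Matrix.smul_mul, h3, smul_smul]
  have hBQB : B * Q * Bᵀ = S * Q * Sᵀ - (n / m) • vecMulVec x x := by
    calc B * Q * Bᵀ = (S - c • vecMulVec x u) * Q * (Sᵀ - c • vecMulVec u x) := by
          rw [← hB, ← hBt]
      _ = S * Q * Sᵀ - c • (S * Q * vecMulVec u x) - c • (vecMulVec x u * Q * Sᵀ)
            + (c * c) • (vecMulVec x u * Q * vecMulVec u x) := by
          simp only [Matrix.sub_mul, Matrix.mul_sub, Matrix.smul_mul, Matrix.mul_smul,
            smul_smul, smul_sub]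
          abel
      _ = S * Q * Sᵀ - (c * n) • vecMulVec x x - (c * n) • vecMulVec x x
            + (c * c * (n * (m:ℝ))) • vecMulVec x x := by
          rw [hQvux, hterm2, hterm3]; simp only [smul_smul]
      _ = S * Q * Sᵀ - (n / m) • vecMulVec x x := by
          have e1 : c * n = n / m := by rw [hc]; field_simp
          have e2 : c * c * (n * (m:ℝ)) = n / m := by rw [hc]; field_simp
          rw [e1, e2]
          have : ∀ M v : Matrix (Fin d) (Fin d) ℝ, M - (n/m) • v - (n/m) • v + (n/m) • v
              = M - (n/m) • v := fun M v => by abel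
          exact this _ _
  have hSJS : S * ((ν : ℝ) • vecMulVec u u) * Sᵀ = ν • vecMulVec x x := by
    rw [Matrix.mul_smul, Matrix.smul_mul, myMulVMV, ← hx, h2]
  have hLHS : S * (Q - ν • vecMulVec u u) * Sᵀ
      = S * Q * Sᵀ - ν • vecMulVec x x := by
    rw [Matrix.mul_sub, Matrix.sub_mul, hSJS]
  rw [hLHS, hBQB, trace_sub, trace_sub, trace_smul, trace_smul, myTraceVMV, smul_eq_mul,
    smul_eq_mul]
  ring

lemma hard_nonempty {m d : ℕ} (hd : d + 1 ≤ m) (lam : Fin d → ℝ)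
    (hlam : ∀ j, 0 ≤ lam j) :
    ∃ S : Matrix (Fin d) (Fin m) ℝ, S * Sᵀ = Matrix.diagonal lam ∧
      S *ᵥ (fun _ => (1:ℝ)) = 0 := by
  have hm : 0 < m := by omega
  set u' : EuclideanSpace ℝ (Fin m) := WithLp.toLp 2 (fun _ => (1:ℝ)) with hu'
  have hu'ne : u' ≠ 0 := by
    intro h
    have h2 := congrArg (fun v : EuclideanSpace ℝ (Fin m) => v ⟨0, hm⟩) h
    simp [hu'] at h2
  set V : Submodule ℝ (EuclideanSpace ℝ (Fin m)) := (ℝ ∙ u')ᗮ with hV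
  have hdim : Module.finrank ℝ V = m - 1 := by
    have h1 := Submodule.finrank_add_finrank_orthogonal (K := (ℝ ∙ u'))
    rw [finrank_span_singleton hu'ne, finrank_euclideanSpace_fin, ← hV] at h1
    omega
  have hdle : d ≤ Module.finrank ℝ V := by rw [hdim]; omega
  set ob := stdOrthonormalBasis ℝ V with hob
  set f : Fin d → EuclideanSpace ℝ (Fin m) :=
    fun i => (ob (Fin.castLE hdle i) : EuclideanSpace ℝ (Fin m)) with hf
  have horth : ∀ i j : Fin d, (∑ k, f i k * f j k) = if i = j then 1 else 0 := by
    intro i j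
    have h2 := ob.orthonormal
    rw [orthonormal_iff_ite] at h2
    have h3 := h2 (Fin.castLE hdle i) (Fin.castLE hdle j)
    rw [Submodule.coe_inner] at h3
    simp only [PiLp.inner_apply, RCLike.inner_apply, conj_trivial] at h3
    simp only [hf]
    simp only [mul_comm] at h3 ⊢
    rw [h3]
    congr 1
    simp [Fin.castLE_inj]
  have hperp : ∀ i : Fin d, (∑ k, f i k) = 0 := by
    intro i
    have h5 : f i ∈ V := (ob (Fin.castLE hdle i)).2
    rw [hV, Submodule.mem_orthogonal] at h5
    have h6 := h5 u' (Submodule.mem_span_singleton_self u')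
    rw [← h6]
    simp [PiLp.inner_apply, hu']
  refine ⟨Matrix.of fun i j => Real.sqrt (lam i) * f i j, ?_, ?_⟩
  · ext i j
    rw [mul_apply]
    simp only [transpose_apply, of_apply]
    have h7 : ∀ k, (Real.sqrt (lam i) * f i k) * (Real.sqrt (lam j) * f j k)
        = (Real.sqrt (lam i) * Real.sqrt (lam j)) * (f i k * f j k) := fun k => by ring
    rw [Finset.sum_congr rfl fun k _ => h7 k, ← Finset.mul_sum, horth]
    by_cases hij : i = j
    · subst hij
      simp [Real.mul_self_sqrt (hlam i)]
    · simp [hij, diagonal_apply_ne _ hij]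
  · ext i
    simp only [mulVec, dotProduct, of_apply, Pi.zero_apply, hu', mul_one]
    rw [← Finset.mul_sum, hperp, mul_zero]

lemma trace_bound {m d : ℕ} (Q : Matrix (Fin m) (Fin m) ℝ) (lam : Fin d → ℝ)
    (hlam : ∀ j, 0 ≤ lam j) (S : Matrix (Fin d) (Fin m) ℝ)
    (hSS : S * Sᵀ = Matrix.diagonal lam) :
    (S * Q * Sᵀ).trace ≤ (∑ i, lam i) * (∑ k, ∑ j, |Q j k|) := by
  have hrow : ∀ i j, S i j * S i j ≤ lam i := by
    intro i j
    have h1 : (S * Sᵀ) i i = lam i := by rw [hSS, diagonal_apply_eq]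
    rw [mul_apply] at h1
    simp only [transpose_apply] at h1
    rw [← h1]
    exact Finset.single_le_sum (fun k _ => mul_self_nonneg (S i k)) (Finset.mem_univ j)
  have habs : ∀ i j, |S i j| ≤ Real.sqrt (lam i) := by
    intro i j
    rw [← Real.sqrt_sq_eq_abs]
    exact Real.sqrt_le_sqrt (by rw [sq]; exact hrow i j)
  have hterm : ∀ (i : Fin d) (j k : Fin m), S i j * Q j k * S i k ≤ lam i * |Q j k| := by
    intro i j k
    have h2 : |S i j * Q j k * S i k| ≤ lam i * |Q j k| := by
      rw [abs_mul, abs_mul]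
      have h3 := habs i j
      have h4 := habs i k
      have h5 := Real.mul_self_sqrt (hlam i)
      have h6 : (0:ℝ) ≤ Real.sqrt (lam i) := Real.sqrt_nonneg _
      have h7 : |S i j| * |S i k| ≤ lam i := by
        nlinarith [abs_nonneg (S i j), abs_nonneg (S i k)]
      calc |S i j| * |Q j k| * |S i k| = (|S i j| * |S i k|) * |Q j k| := by ring
        _ ≤ lam i * |Q j k| := mul_le_mul_of_nonneg_right h7 (abs_nonneg _)
    exact le_trans (le_abs_self _) h2
  have hexp : (S * Q * Sᵀ).trace = ∑ i, ∑ k, ∑ j, S i j * Q j k * S i k := by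
    simp [trace, Matrix.diag, mul_apply, transpose_apply, Finset.sum_mul]
  rw [hexp]
  calc ∑ i, ∑ k, ∑ j, S i j * Q j k * S i k
      ≤ ∑ i : Fin d, ∑ k : Fin m, ∑ j : Fin m, lam i * |Q j k| :=
        Finset.sum_le_sum fun i _ => Finset.sum_le_sum fun k _ =>
          Finset.sum_le_sum fun j _ => hterm i j k
    _ = (∑ i, lam i) * (∑ k, ∑ j, |Q j k|) := by
        rw [Finset.sum_mul]
        refine Finset.sum_congr rfl fun i _ => ?_
        rw [Finset.mul_sum]
        exact Finset.sum_congr rfl fun k _ => (Finset.mul_sum _ _ _).symm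


/-- for a symmetric positive semidefinite `Q` with `Q 𝟏 = n 𝟏`
(`n > 0`), `d ≤ m − 1`, `Λ = diag(λ)` with `λ` nonincreasing and nonnegative, and
`ν ≥ n/m`, the soft-constrained problem (penalty `−ν ‖S 𝟏‖²`) and the
hard-constrained problem (`S 𝟏 = 0`) have the same optimal value. -/
theorem soft_eq_hard_optimal_value (m d : ℕ) (hd : d + 1 ≤ m)
    (Q : Matrix (Fin m) (Fin m) ℝ) (hQ : Q.PosSemidef)
    (n : ℝ) (hn : 0 < n)
    (hQ1 : Q *ᵥ (fun _ => (1 : ℝ)) = n • (fun _ => (1 : ℝ)))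
    (lam : Fin d → ℝ)
    (hlam_anti : ∀ i j : Fin d, i ≤ j → lam j ≤ lam i)
    (hlam_nonneg : ∀ j : Fin d, 0 ≤ lam j)
    (ν : ℝ) (hν : n / (m : ℝ) ≤ ν) :
    sSup {c : ℝ | ∃ S : Matrix (Fin d) (Fin m) ℝ,
        S * Sᵀ = Matrix.diagonal lam ∧
        c = (S * (Q - ν • vecMulVec (fun _ => (1 : ℝ)) (fun _ => (1 : ℝ))) * Sᵀ).trace} =
      sSup {c : ℝ | ∃ S : Matrix (Fin d) (Fin m) ℝ,
        S * Sᵀ = Matrix.diagonal lam ∧ S *ᵥ (fun _ => (1 : ℝ)) = 0 ∧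
        c = (S * Q * Sᵀ).trace} := by
  have hm : 0 < m := by omega
  have hmR : (0:ℝ) < (m:ℝ) := by exact_mod_cast hm
  have hν0 : 0 < ν := lt_of_lt_of_le (by positivity) hν
  set u : Fin m → ℝ := fun _ => (1:ℝ) with hu
  set soft : Set ℝ := {c : ℝ | ∃ S : Matrix (Fin d) (Fin m) ℝ,
      S * Sᵀ = Matrix.diagonal lam ∧
      c = (S * (Q - ν • vecMulVec u u) * Sᵀ).trace} with hsoft
  set hard : Set ℝ := {c : ℝ | ∃ S : Matrix (Fin d) (Fin m) ℝ,
      S * Sᵀ = Matrix.diagonal lam ∧ S *ᵥ u = 0 ∧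
      c = (S * Q * Sᵀ).trace} with hhard
  have hsub : hard ⊆ soft := by
    rintro c ⟨S, h1, h2, h3⟩
    refine ⟨S, h1, ?_⟩
    have hSJ : S * vecMulVec u u = 0 := by rw [myMulVMV, h2, myVMVzero]
    have h4 : S * (Q - ν • vecMulVec u u) = S * Q := by
      rw [Matrix.mul_sub, Matrix.mul_smul, hSJ, smul_zero, sub_zero]
    rw [h3, h4]
  have hbdd : BddAbove soft := by
    refine ⟨(∑ i, lam i) * (∑ k, ∑ j, |Q j k|), ?_⟩
    rintro c ⟨S, hSS, rfl⟩
    have hSJS : S * (ν • vecMulVec u u) * Sᵀ = ν • vecMulVec (S *ᵥ u) (S *ᵥ u) := by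
      rw [Matrix.mul_smul, Matrix.smul_mul, myMulVMV, myVMVMul, transpose_transpose]
    have hLHS : (S * (Q - ν • vecMulVec u u) * Sᵀ).trace
        = (S * Q * Sᵀ).trace - ν * ((S *ᵥ u) ⬝ᵥ (S *ᵥ u)) := by
      rw [Matrix.mul_sub, Matrix.sub_mul, hSJS, trace_sub, trace_smul, myTraceVMV,
        smul_eq_mul]
    have hxx : 0 ≤ (S *ᵥ u) ⬝ᵥ (S *ᵥ u) := Finset.sum_nonneg fun i _ => mul_self_nonneg _
    have h5 : (S * (Q - ν • vecMulVec u u) * Sᵀ).trace ≤ (S * Q * Sᵀ).trace := by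
      rw [hLHS]
      nlinarith [mul_nonneg hν0.le hxx]
    exact le_trans h5 (trace_bound Q lam hlam_nonneg S hSS)
  have hard_ne : hard.Nonempty := by
    obtain ⟨S₀, h1, h2⟩ := hard_nonempty hd lam hlam_nonneg
    exact ⟨(S₀ * Q * S₀ᵀ).trace, S₀, h1, h2, rfl⟩
  have soft_ne : soft.Nonempty := by
    obtain ⟨c, hc⟩ := hard_ne
    exact ⟨c, hsub hc⟩
  have hard_bdd : BddAbove hard := hbdd.mono hsub
  apply le_antisymm
  · apply csSup_le soft_ne
    rintro c ⟨S, hSS, rfl⟩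
    obtain ⟨B, x, hB1, hBB, htr, hxx⟩ := decompose hm Q hQ n ν hQ1 lam S hSS
    obtain ⟨S', h1, h2, h3⟩ := exchange hd Q hQ lam hlam_nonneg B x hB1 hBB
    have h4 : (S * (Q - ν • vecMulVec u u) * Sᵀ).trace ≤ (S' * Q * S'ᵀ).trace := by
      rw [htr]
      nlinarith [mul_nonneg (sub_nonneg.mpr hν) hxx]
    exact le_trans h4 (le_csSup hard_bdd ⟨S', h1, h2, rfl⟩)
  · exact csSup_le_csSup hbdd hard_ne hsub
end

section
/- Let K ∈ ℝ^{l×l} be symmetric and invertible, and let C̃ ∈ ℝ^{(d+1)×l} be such that C̃ K⁻¹ C̃ᵀ is invertible. Define Ē = K⁻¹ − K⁻¹ C̃ᵀ (C̃ K⁻¹ C̃ᵀ)⁻¹ C̃ K⁻¹ and F = (C̃ K⁻¹ C̃ᵀ)⁻¹ C̃ K⁻¹. Let M ∈ ℝ^{l×m} be arbitrary, let P̃ ∈ ℝ^{(d+1)×m} be any matrix whose last row is the all-ones row vector 𝟏ᵀ, and define the feature matrix B = Ē M + Fᵀ P̃ ∈ ℝ^{l×m}. Then the vector x = C̃ᵀ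 e_{d+1} ∈ ℝ^l, where e_{d+1} is the last standard basis vector of ℝ^{d+1}, satisfies Bᵀ x = 𝟏 and Ē x = 0. Consequently the Thin-Plate Spline warp contains free-translations: there exists x with B(D)ᵀ x = 𝟏 and Z x = 0 whenever Zᵀ Z = Ē. -/
open Matrix

/-- with `Ē = K⁻¹ − K⁻¹ C̃ᵀ (C̃ K⁻¹ C̃ᵀ)⁻¹ C̃ K⁻¹`,
`F = (C̃ K⁻¹ C̃ᵀ)⁻¹ C̃ K⁻¹`, an arbitrary `M`, a matrix `P̃` whose last row is all
ones, and the feature matrix `B = Ē M + Fᵀ P̃`, the vector `x = C̃ᵀ e_{d+1}`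
satisfies `Bᵀ x = 𝟏` and `Ē x = 0`; consequently `Z x = 0` whenever `Zᵀ Z = Ē`,
i.e. the Thin-Plate Spline warp contains free-translations. -/
theorem tps_contains_free_translations (l d m : ℕ)
    (K : Matrix (Fin l) (Fin l) ℝ) (hK_symm : K.IsSymm) (hK : IsUnit K)
    (C : Matrix (Fin (d + 1)) (Fin l) ℝ)
    (hC : IsUnit (C * K⁻¹ * Cᵀ))
    (M : Matrix (Fin l) (Fin m) ℝ)
    (P : Matrix (Fin (d + 1)) (Fin m) ℝ)
    (hP : ∀ j, P (Fin.last d) j = 1) :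
    ((K⁻¹ - K⁻¹ * Cᵀ * (C * K⁻¹ * Cᵀ)⁻¹ * C * K⁻¹) * M +
        ((C * K⁻¹ * Cᵀ)⁻¹ * C * K⁻¹)ᵀ * P)ᵀ *ᵥ
        (Cᵀ *ᵥ Pi.single (Fin.last d) 1) = (fun _ => (1 : ℝ)) ∧
    (K⁻¹ - K⁻¹ * Cᵀ * (C * K⁻¹ * Cᵀ)⁻¹ * C * K⁻¹) *ᵥ
        (Cᵀ *ᵥ Pi.single (Fin.last d) 1) = 0 ∧
    ∀ (r : ℕ) (Z : Matrix (Fin r) (Fin l) ℝ),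
      Zᵀ * Z = K⁻¹ - K⁻¹ * Cᵀ * (C * K⁻¹ * Cᵀ)⁻¹ * C * K⁻¹ →
      Z *ᵥ (Cᵀ *ᵥ Pi.single (Fin.last d) 1) = 0 := by
  set S := C * K⁻¹ * Cᵀ with hS
  have hSdet : IsUnit S.det := (Matrix.isUnit_iff_isUnit_det S).mp hC
  have hSinv : S⁻¹ * S = 1 := Matrix.nonsing_inv_mul S hSdet
  have hKinvT : (K⁻¹)ᵀ = K⁻¹ := by
    rw [Matrix.transpose_nonsing_inv, hK_symm]
  have hST : Sᵀ = S := by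
    simp [hS, Matrix.transpose_mul, hKinvT, Matrix.mul_assoc]
  have hSinvT : (S⁻¹)ᵀ = S⁻¹ := by
    rw [Matrix.transpose_nonsing_inv, hST]
  set E := K⁻¹ - K⁻¹ * Cᵀ * S⁻¹ * C * K⁻¹ with hE
  have hECt : E * Cᵀ = 0 := by
    have : K⁻¹ * Cᵀ * S⁻¹ * C * K⁻¹ * Cᵀ = K⁻¹ * Cᵀ := by
      calc K⁻¹ * Cᵀ * S⁻¹ * C * K⁻¹ * Cᵀ
          = K⁻¹ * Cᵀ * (S⁻¹ * S) := by rw [hS]; simp only [Matrix.mul_assoc]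
        _ = K⁻¹ * Cᵀ := by rw [hSinv, Matrix.mul_one]
    rw [hE, Matrix.sub_mul, this, sub_self]
  have hEsymm : Eᵀ = E := by
    rw [hE]
    simp [Matrix.transpose_sub, Matrix.transpose_mul, hKinvT, hSinvT, Matrix.mul_assoc]
  have hEx : E *ᵥ (Cᵀ *ᵥ Pi.single (Fin.last d) 1) = 0 := by
    rw [Matrix.mulVec_mulVec, hECt, Matrix.zero_mulVec]
  have hFCt : S⁻¹ * C * K⁻¹ * Cᵀ = 1 := by
    rw [Matrix.mul_assoc, Matrix.mul_assoc, ← Matrix.mul_assoc C, ← hS, hSinv]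
  refine ⟨?_, hEx, ?_⟩
  · have hBt : (E * M + (S⁻¹ * C * K⁻¹)ᵀ * P)ᵀ * Cᵀ = Pᵀ := by
      rw [Matrix.transpose_add, Matrix.transpose_mul, Matrix.transpose_mul,
        Matrix.transpose_transpose, hEsymm, Matrix.add_mul,
        Matrix.mul_assoc Mᵀ, hECt, Matrix.mul_zero, Matrix.mul_assoc Pᵀ, hFCt,
        Matrix.mul_one, zero_add]
    rw [Matrix.mulVec_mulVec, hBt]
    funext i
    simp [Matrix.mulVec_single, hP]
  · intro r Z hZ
    set x := Cᵀ *ᵥ Pi.single (Fin.last d) 1 with hx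
    have hdot : (Z *ᵥ x) ⬝ᵥ (Z *ᵥ x) = 0 := by
      have : (Z *ᵥ x) ⬝ᵥ (Z *ᵥ x) = ((Zᵀ * Z) *ᵥ x) ⬝ᵥ x := by
        rw [Matrix.dotProduct_mulVec, ← Matrix.mulVec_transpose, Matrix.mulVec_mulVec]
      rw [this, hZ, hEx, zero_dotProduct]
    exact dotProduct_self_eq_zero.mp hdot
end
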